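/- arXiv:1510.08291 — 8 statements merged into one kernel-verified Lean document; each statement's English description precedes it below -/
import Mathlib

section
/- If M ≥ rank(X) (so that a factorization X = Φ·A with Φ ∈ ℝ^{p×M}, A ∈ ℝ^{M×K} exists), then the infimum defining ψ^M(X) is attained: there exist Φ ∈ ℝ^{p×M} and A ∈ ℝ^{M×K} with Φ·A = X and Σ_{m=1}^M n_Φ(Φ_m)·n_A((A_{m,:})ᵀ) = ψ^M(X). -/
open scoped ENNReal

section Aux

private lemma psiAux_seminorm_facts {n : ℕ} (f : (Fin n → ℝ) → ℝ)
    (hadd : ∀ x y, f (x + y) ≤ f x + f y)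
    (hsmul : ∀ (c : ℝ) (x), f (c • x) = |c| * f x)
    (hdef : ∀ x, f x = 0 ↔ x = 0) :
    (∀ x, 0 ≤ f x) ∧ Continuous f ∧ ∃ C > 0, ∀ x, ‖x‖ ≤ C * f x := by
  have f0 : f 0 = 0 := (hdef 0).mpr rfl
  have fneg : ∀ x, f (-x) = f x := by
    intro x
    have := hsmul (-1) x
    simpa using this
  have hnn : ∀ x, 0 ≤ f x := by
    intro x
    have h1 : f 0 ≤ f x + f (-x) := by
      have := hadd x (-x); simpa using this
    rw [f0, fneg] at h1
    linarith
  set C1 : ℝ := ∑ i : Fin n, f (Pi.single i 1) with hC1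
  have hC1nn : 0 ≤ C1 := Finset.sum_nonneg fun i _ => hnn _
  have hub : ∀ x, f x ≤ C1 * ‖x‖ := by
    intro x
    have hx : x = ∑ i : Fin n, Pi.single i (x i) := (Finset.univ_sum_single x).symm
    calc f x = f (∑ i : Fin n, Pi.single i (x i)) := by rw [← hx]
      _ ≤ ∑ i : Fin n, f (Pi.single i (x i)) :=
          Finset.le_sum_of_subadditive f f0.le hadd _ _
      _ ≤ ∑ i : Fin n, f (Pi.single i 1) * ‖x‖ := by
          refine Finset.sum_le_sum fun i _ => ?_
          have h1 : (Pi.single i (x i) : Fin n → ℝ) = (x i) • (Pi.single i (1:ℝ) : Fin n → ℝ) := by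
            funext j
            simp only [Pi.single_apply, Pi.smul_apply, smul_eq_mul]
            split_ifs <;> simp
          rw [h1, hsmul]
          have : |x i| ≤ ‖x‖ := by
            simpa [Real.norm_eq_abs] using norm_le_pi_norm x i
          calc |x i| * f (Pi.single i 1) ≤ ‖x‖ * f (Pi.single i 1) :=
                mul_le_mul_of_nonneg_right this (hnn _)
            _ = f (Pi.single i 1) * ‖x‖ := mul_comm _ _
      _ = C1 * ‖x‖ := by rw [← Finset.sum_mul]
  have hlip : ∀ x y, |f x - f y| ≤ C1 * ‖x - y‖ := by
    intro x y
    have h1 : f x ≤ f y + f (x - y) := by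
      have := hadd y (x - y); simpa using this
    have h2 : f y ≤ f x + f (x - y) := by
      have := hadd x (y - x)
      rw [show x + (y - x) = y by ring] at this
      rw [show y - x = -(x-y) by ring, fneg] at this
      exact this
    have := hub (x - y)
    rw [abs_sub_le_iff]
    constructor <;> linarith
  have hcont : Continuous f := by
    rcases eq_or_lt_of_le hC1nn with h0 | hpos
    · have : ∀ x, f x = 0 := fun x => le_antisymm (by simpa [← h0] using hub x) (hnn x)
      simpa [funext this] using continuous_const
    · apply (lipschitzWith_iff_dist_le_mul (K := ⟨C1, hC1nn⟩)).mpr ?_ |>.continuous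
      intro x y
      rw [Real.dist_eq, dist_eq_norm]
      exact hlip x y
  refine ⟨hnn, hcont, ?_⟩
  rcases Nat.eq_zero_or_pos n with hn | hn
  · refine ⟨1, one_pos, fun x => ?_⟩
    subst hn
    have hx : x = 0 := funext fun i => i.elim0
    rw [hx, f0, norm_zero, mul_zero]
  · haveI : Nonempty (Fin n) := ⟨⟨0, hn⟩⟩
    obtain ⟨z, hz, hmin⟩ := (isCompact_sphere (0 : Fin n → ℝ) 1).exists_isMinOn
      (NormedSpace.sphere_nonempty.mpr zero_le_one) hcont.continuousOn
    have hznorm : ‖z‖ = 1 := by simpa using mem_sphere_zero_iff_norm.mp hz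
    have hz0 : z ≠ 0 := by intro h; rw [h] at hznorm; simp at hznorm
    have hm : 0 < f z := lt_of_le_of_ne (hnn z) fun h => hz0 ((hdef z).mp h.symm)
    refine ⟨(f z)⁻¹, inv_pos.mpr hm, fun x => ?_⟩
    rcases eq_or_ne x 0 with rfl | hx0
    · simp [f0]
    · have hxn : 0 < ‖x‖ := norm_pos_iff.mpr hx0
      set u := ‖x‖⁻¹ • x with hu
      have hus : u ∈ Metric.sphere (0 : Fin n → ℝ) 1 := by
        simp [hu, norm_smul, abs_of_pos (inv_pos.mpr hxn), inv_mul_cancel₀ hxn.ne']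
      have hfu : f z ≤ f u := hmin hus
      have hfx : f x = ‖x‖ * f u := by
        rw [hu, hsmul, abs_of_pos (inv_pos.mpr hxn)]
        field_simp
      rw [hfx]
      have : ‖x‖ * f z ≤ ‖x‖ * f u := mul_le_mul_of_nonneg_left hfu hxn.le
      calc ‖x‖ = (f z)⁻¹ * (‖x‖ * f z) := by field_simp
        _ ≤ (f z)⁻¹ * (‖x‖ * f u) := mul_le_mul_of_nonneg_left this (inv_pos.mpr hm).le


private lemma psiAux_balance {p K M : ℕ} (nPhi : (Fin p → ℝ) → ℝ) (nA : (Fin K → ℝ) → ℝ)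
    (hPhi_smul : ∀ (c : ℝ) (x), nPhi (c • x) = |c| * nPhi x)
    (hPhi_def : ∀ x, nPhi x = 0 ↔ x = 0)
    (hA_smul : ∀ (c : ℝ) (x), nA (c • x) = |c| * nA x)
    (hA_def : ∀ x, nA x = 0 ↔ x = 0)
    (hPnn : ∀ x, 0 ≤ nPhi x) (hAnn : ∀ x, 0 ≤ nA x)
    (Φ : Fin p → Fin M → ℝ) (A : Fin M → Fin K → ℝ) :
    ∃ (Φ' : Fin p → Fin M → ℝ) (A' : Fin M → Fin K → ℝ),
      (∀ i k, ∑ m, Φ' i m * A' m k = ∑ m, Φ i m * A m k) ∧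
      (∑ m, nPhi (fun i => Φ' i m) * nA (fun k => A' m k)
        = ∑ m, nPhi (fun i => Φ i m) * nA (fun k => A m k)) ∧
      (∀ m, nPhi (fun i => Φ' i m) = nA (fun k => A' m k)) := by
  classical
  have hcol : ∀ (c : ℝ) m, nPhi (fun i => c * Φ i m) = |c| * nPhi (fun i => Φ i m) := by
    intro c m
    have h : (fun i => c * Φ i m) = c • (fun i => Φ i m) := by funext i; simp
    rw [h, hPhi_smul]
  have hrow : ∀ (c : ℝ) m, nA (fun k => c * A m k) = |c| * nA (fun k => A m k) := by
    intro c m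
    have h : (fun k => c * A m k) = c • (fun k => A m k) := by funext k; simp
    rw [h, hA_smul]
  refine ⟨fun i m => (if nPhi (fun i' => Φ i' m) = 0 ∨ nA (fun k' => A m k') = 0 then 0
      else Real.sqrt (nA (fun k' => A m k') / nPhi (fun i' => Φ i' m))) * Φ i m,
    fun m k => (if nPhi (fun i' => Φ i' m) = 0 ∨ nA (fun k' => A m k') = 0 then 0
      else Real.sqrt (nPhi (fun i' => Φ i' m) / nA (fun k' => A m k'))) * A m k, ?_, ?_, ?_⟩
  · intro i k
    refine Finset.sum_congr rfl fun m _ => ?_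
    beta_reduce
    set a := nPhi (fun i' => Φ i' m) with ha_def
    set b := nA (fun k' => A m k') with hb_def
    by_cases h : a = 0 ∨ b = 0
    · rcases h with h | h
      · have h0 : Φ i m = 0 := congrFun ((hPhi_def _).mp h) i
        rw [h0]; ring
      · have h0 : A m k = 0 := congrFun ((hA_def _).mp h) k
        rw [h0]; ring
    · push_neg at h
      obtain ⟨ha0, hb0⟩ := h
      have hap : 0 < a := lt_of_le_of_ne (hPnn _) (Ne.symm ha0)
      have hbp : 0 < b := lt_of_le_of_ne (hAnn _) (Ne.symm hb0)
      have hcond : ¬(a = 0 ∨ b = 0) := by push_neg; exact ⟨ha0, hb0⟩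
      rw [if_neg hcond, if_neg hcond]
      have hsr : Real.sqrt (b / a) * Real.sqrt (a / b) = 1 := by
        rw [← Real.sqrt_mul (by positivity)]
        rw [show b / a * (a / b) = 1 by field_simp]
        exact Real.sqrt_one
      calc Real.sqrt (b / a) * Φ i m * (Real.sqrt (a / b) * A m k)
          = (Real.sqrt (b / a) * Real.sqrt (a / b)) * (Φ i m * A m k) := by ring
        _ = Φ i m * A m k := by rw [hsr, one_mul]
  · refine Finset.sum_congr rfl fun m _ => ?_
    beta_reduce
    rw [hcol, hrow]
    set a := nPhi (fun i' => Φ i' m) with ha_def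
    set b := nA (fun k' => A m k') with hb_def
    by_cases h : a = 0 ∨ b = 0
    · rw [if_pos h, if_pos h, abs_zero, zero_mul, zero_mul]
      rcases h with h | h <;> rw [h] <;> ring
    · push_neg at h
      obtain ⟨ha0, hb0⟩ := h
      have hap : 0 < a := lt_of_le_of_ne (hPnn _) (Ne.symm ha0)
      have hbp : 0 < b := lt_of_le_of_ne (hAnn _) (Ne.symm hb0)
      have hcond : ¬(a = 0 ∨ b = 0) := by push_neg; exact ⟨ha0, hb0⟩
      rw [if_neg hcond, if_neg hcond,
        abs_of_nonneg (Real.sqrt_nonneg _), abs_of_nonneg (Real.sqrt_nonneg _)]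
      have hsr : Real.sqrt (b / a) * Real.sqrt (a / b) = 1 := by
        rw [← Real.sqrt_mul (by positivity)]
        rw [show b / a * (a / b) = 1 by field_simp]
        exact Real.sqrt_one
      calc Real.sqrt (b / a) * a * (Real.sqrt (a / b) * b)
          = (Real.sqrt (b / a) * Real.sqrt (a / b)) * (a * b) := by ring
        _ = a * b := by rw [hsr, one_mul]
  · intro m
    beta_reduce
    rw [hcol, hrow]
    set a := nPhi (fun i' => Φ i' m) with ha_def
    set b := nA (fun k' => A m k') with hb_def
    by_cases h : a = 0 ∨ b = 0
    · rw [if_pos h, if_pos h, abs_zero, zero_mul, zero_mul]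
    · push_neg at h
      obtain ⟨ha0, hb0⟩ := h
      have hap : 0 < a := lt_of_le_of_ne (hPnn _) (Ne.symm ha0)
      have hbp : 0 < b := lt_of_le_of_ne (hAnn _) (Ne.symm hb0)
      have hcond : ¬(a = 0 ∨ b = 0) := by push_neg; exact ⟨ha0, hb0⟩
      rw [if_neg hcond, if_neg hcond,
        abs_of_nonneg (Real.sqrt_nonneg _), abs_of_nonneg (Real.sqrt_nonneg _)]
      rw [show a = Real.sqrt (a^2) from (Real.sqrt_sq hap.le).symm]
      rw [show b = Real.sqrt (b^2) from (Real.sqrt_sq hbp.le).symm]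
      rw [← Real.sqrt_mul (by positivity), ← Real.sqrt_mul (by positivity)]
      congr 1
      field_simp
      rw [Real.sq_sqrt (sq_nonneg b), Real.sq_sqrt (sq_nonneg a)] <;> ring


private lemma psiAux_exists_factorization (p K M : ℕ) (X : Matrix (Fin p) (Fin K) ℝ)
    (hM : X.rank ≤ M) :
    ∃ (Φ : Matrix (Fin p) (Fin M) ℝ) (A : Matrix (Fin M) (Fin K) ℝ), Φ * A = X := by
  classical
  set f := X.mulVecLin
  set V := LinearMap.range f
  have hr : Module.finrank ℝ V = X.rank := rfl
  have hrM : Module.finrank ℝ V ≤ M := by rw [hr]; exact hM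
  set r := Module.finrank ℝ V
  let b : Module.Basis (Fin r) ℝ V := Module.finBasis ℝ V
  let e : V ≃ₗ[ℝ] (Fin r → ℝ) := b.equivFun
  let ext : (Fin r → ℝ) →ₗ[ℝ] (Fin M → ℝ) := Function.ExtendByZero.linearMap ℝ (Fin.castLE hrM)
  let res : (Fin M → ℝ) →ₗ[ℝ] (Fin r → ℝ) := LinearMap.funLeft ℝ ℝ (Fin.castLE hrM)
  let h : (Fin K → ℝ) →ₗ[ℝ] (Fin M → ℝ) := ext ∘ₗ (e.toLinearMap ∘ₗ f.rangeRestrict)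
  let g : (Fin M → ℝ) →ₗ[ℝ] (Fin p → ℝ) := V.subtype ∘ₗ (e.symm.toLinearMap ∘ₗ res)
  have hgh : g ∘ₗ h = f := by
    ext x
    have hre : ∀ w : Fin r → ℝ, res (ext w) = w := by
      intro w
      funext i
      simp [res, ext, Function.ExtendByZero.linearMap]
      exact (Fin.castLE_injective hrM).extend_apply _ _ _
    simp [g, h, hre]
  refine ⟨LinearMap.toMatrix' g, LinearMap.toMatrix' h, ?_⟩
  have : LinearMap.toMatrix' g * LinearMap.toMatrix' h = LinearMap.toMatrix' (g ∘ₗ h) :=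
    (LinearMap.toMatrix'_comp g h).symm
  rw [this, hgh]
  rw [show f = Matrix.toLin' X from (Matrix.toLin'_apply' X).symm, LinearMap.toMatrix'_toLin']


end Aux

/-- The function `ψ^M(X)`: the infimum of `∑_{m=1}^M n_Φ(Φ_m) · n_A((A_{m,:})ᵀ)`
over all factorisations `Φ · A = X` with `Φ ∈ ℝ^{p×M}` and `A ∈ ℝ^{M×K}`
(the infimum over the empty set being `+∞`). -/
noncomputable def psi (p K : ℕ) (nPhi : (Fin p → ℝ) → ℝ) (nA : (Fin K → ℝ) → ℝ)
    (M : ℕ) (X : Matrix (Fin p) (Fin K) ℝ) : ℝ≥0∞ :=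
  ⨅ (Φ : Matrix (Fin p) (Fin M) ℝ) (A : Matrix (Fin M) (Fin K) ℝ) (_ : Φ * A = X),
    ENNReal.ofReal (∑ m : Fin M, nPhi (fun i => Φ i m) * nA (fun k => A m k))

/-- If `M ≥ rank(X)`, the infimum defining `ψ^M(X)` is attained. -/
theorem psi_attained (p K : ℕ) (nPhi : (Fin p → ℝ) → ℝ) (nA : (Fin K → ℝ) → ℝ)
    (hPhi_add : ∀ x y, nPhi (x + y) ≤ nPhi x + nPhi y)
    (hPhi_smul : ∀ (c : ℝ) (x), nPhi (c • x) = |c| * nPhi x)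
    (hPhi_def : ∀ x, nPhi x = 0 ↔ x = 0)
    (hA_add : ∀ x y, nA (x + y) ≤ nA x + nA y)
    (hA_smul : ∀ (c : ℝ) (x), nA (c • x) = |c| * nA x)
    (hA_def : ∀ x, nA x = 0 ↔ x = 0)
    (M : ℕ) (X : Matrix (Fin p) (Fin K) ℝ) (hM : X.rank ≤ M) :
    ∃ (Φ : Matrix (Fin p) (Fin M) ℝ) (A : Matrix (Fin M) (Fin K) ℝ),
      Φ * A = X ∧
      ENNReal.ofReal (∑ m : Fin M, nPhi (fun i => Φ i m) * nA (fun k => A m k)) =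
        psi p K nPhi nA M X := by
  classical
  obtain ⟨hPnn, hPcont, CP, hCPpos, hCP⟩ :=
    psiAux_seminorm_facts nPhi hPhi_add hPhi_smul hPhi_def
  obtain ⟨hAnn, hAcont, CA, hCApos, hCA⟩ :=
    psiAux_seminorm_facts nA hA_add hA_smul hA_def
  set Y := (Fin p → Fin M → ℝ) × (Fin M → Fin K → ℝ) with hY_def
  set F : Y → ℝ :=
    fun q => ∑ m : Fin M, nPhi (fun i => q.1 i m) * nA (fun k => q.2 m k) with hF_def
  set S : Set Y := {q | ∀ i k, ∑ m, q.1 i m * q.2 m k = X i k} with hS_def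
  have hFnn : ∀ q, 0 ≤ F q :=
    fun q => Finset.sum_nonneg fun m _ => mul_nonneg (hPnn _) (hAnn _)
  have hcontP : ∀ m : Fin M, Continuous (fun q : Y => nPhi (fun i => q.1 i m)) := fun m =>
    hPcont.comp (continuous_pi fun i =>
      (continuous_apply m).comp ((continuous_apply i).comp continuous_fst))
  have hcontA : ∀ m : Fin M, Continuous (fun q : Y => nA (fun k => q.2 m k)) := fun m =>
    hAcont.comp (continuous_pi fun k =>
      (continuous_apply k).comp ((continuous_apply m).comp continuous_snd))
  have hFcont : Continuous F :=
    continuous_finset_sum _ fun m _ => (hcontP m).mul (hcontA m)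
  have memS_of : ∀ (Φ : Matrix (Fin p) (Fin M) ℝ) (A : Matrix (Fin M) (Fin K) ℝ),
      Φ * A = X → ((fun i m => Φ i m, fun m k => A m k) : Y) ∈ S := by
    intro Φ A h i k
    have h2 := congrFun (congrFun h i) k
    rw [Matrix.mul_apply] at h2
    exact h2
  have psi_le : ∀ q ∈ S, psi p K nPhi nA M X ≤ ENNReal.ofReal (F q) := by
    intro q hq
    have hmul : (Matrix.of q.1) * (Matrix.of q.2) = X := by
      ext i k
      rw [Matrix.mul_apply]
      exact hq i k
    refine iInf_le_of_le (Matrix.of q.1) (iInf_le_of_le (Matrix.of q.2) ?_)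
    rw [iInf_pos hmul]
    exact le_of_eq rfl
  have le_psi : ∀ q : Y, (∀ q' ∈ S, F q ≤ F q') →
      ENNReal.ofReal (F q) ≤ psi p K nPhi nA M X := by
    intro q hq
    refine le_iInf fun Φ => le_iInf fun A => le_iInf fun hFA => ?_
    exact ENNReal.ofReal_le_ofReal (hq _ (memS_of Φ A hFA))
  -- nonemptiness of S and finiteness of psi
  obtain ⟨Φ0, A0, hΦA0⟩ := psiAux_exists_factorization p K M X hM
  have hq0 : ((fun i m => Φ0 i m, fun m k => A0 m k) : Y) ∈ S := memS_of _ _ hΦA0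
  have hpsi_ne_top : psi p K nPhi nA M X ≠ ⊤ :=
    ne_top_of_le_ne_top ENNReal.ofReal_ne_top (psi_le _ hq0)
  set c0 := (psi p K nPhi nA M X).toReal with hc0_def
  have hc0 : psi p K nPhi nA M X = ENNReal.ofReal c0 :=
    (ENNReal.ofReal_toReal hpsi_ne_top).symm
  have hc0nn : 0 ≤ c0 := ENNReal.toReal_nonneg
  have hc1 : psi p K nPhi nA M X + 1 = ENNReal.ofReal (c0 + 1) := by
    rw [hc0, ← ENNReal.ofReal_one, ← ENNReal.ofReal_add hc0nn zero_le_one]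
  set B := Real.sqrt (c0 + 1) with hB_def
  have hBnn : 0 ≤ B := Real.sqrt_nonneg _
  set T : Set Y := {q | q ∈ S ∧ F q ≤ c0 + 1 ∧
    ∀ m, nPhi (fun i => q.1 i m) ≤ B ∧ nA (fun k => q.2 m k) ≤ B} with hT_def
  -- balanced elements with small F are in T
  have hbound : ∀ q ∈ S, F q ≤ c0 + 1 →
      (∀ m, nPhi (fun i => q.1 i m) = nA (fun k => q.2 m k)) → q ∈ T := by
    intro q hq hF hbal
    refine ⟨hq, hF, fun m => ?_⟩
    have hterm : nPhi (fun i => q.1 i m) * nA (fun k => q.2 m k) ≤ F q :=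
      Finset.single_le_sum (f := fun m' => nPhi (fun i => q.1 i m') * nA (fun k => q.2 m' k))
        (fun m' _ => mul_nonneg (hPnn _) (hAnn _)) (Finset.mem_univ m)
    have hsq : nPhi (fun i => q.1 i m) ^ 2 ≤ c0 + 1 := by
      rw [sq]
      calc nPhi (fun i => q.1 i m) * nPhi (fun i => q.1 i m)
          = nPhi (fun i => q.1 i m) * nA (fun k => q.2 m k) := by rw [hbal m]
        _ ≤ F q := hterm
        _ ≤ c0 + 1 := hF
    have h1 : nPhi (fun i => q.1 i m) ≤ B := (Real.le_sqrt (hPnn _) (by linarith)).mpr hsq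
    exact ⟨h1, (hbal m) ▸ h1⟩
  -- balancing into S
  have hbalS : ∀ q ∈ S, ∃ q' ∈ S, F q' = F q ∧
      (∀ m, nPhi (fun i => q'.1 i m) = nA (fun k => q'.2 m k)) := by
    intro q hq
    obtain ⟨Φ', A', hprod, hsum, hbal⟩ := psiAux_balance nPhi nA hPhi_smul hPhi_def
      hA_smul hA_def hPnn hAnn q.1 q.2
    exact ⟨(Φ', A'), fun i k => (hprod i k).trans (hq i k), hsum, hbal⟩
  -- T is nonempty
  have hTne : T.Nonempty := by
    have hlt : psi p K nPhi nA M X < psi p K nPhi nA M X + 1 :=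
      ENNReal.lt_add_right hpsi_ne_top one_ne_zero
    have hlt2 : (⨅ (Φ : Matrix (Fin p) (Fin M) ℝ) (A : Matrix (Fin M) (Fin K) ℝ)
        (_ : Φ * A = X), ENNReal.ofReal (∑ m : Fin M,
          nPhi (fun i => Φ i m) * nA (fun k => A m k))) < psi p K nPhi nA M X + 1 := hlt
    obtain ⟨Φ1, h1⟩ := iInf_lt_iff.mp hlt2
    obtain ⟨A1, h2⟩ := iInf_lt_iff.mp h1
    obtain ⟨hX1, h3⟩ := iInf_lt_iff.mp h2
    set q1 : Y := (fun i m => Φ1 i m, fun m k => A1 m k) with hq1_def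
    have hq1S : q1 ∈ S := memS_of _ _ hX1
    have hFq1 : F q1 ≤ c0 + 1 := by
      have h4 : ENNReal.ofReal (F q1) < ENNReal.ofReal (c0 + 1) := by
        rw [← hc1]; exact h3
      exact ((ENNReal.ofReal_lt_ofReal_iff_of_nonneg (hFnn q1)).mp h4).le
    obtain ⟨q', hq'S, hq'F, hq'bal⟩ := hbalS q1 hq1S
    exact ⟨q', hbound q' hq'S (hq'F.trans_le hFq1) hq'bal⟩
  -- T is closed
  have hScl : IsClosed S := by
    have hrw : S = ⋂ (i : Fin p) (k : Fin K), {q : Y | ∑ m, q.1 i m * q.2 m k = X i k} := by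
      ext q
      simp only [hS_def, Set.mem_setOf_eq, Set.mem_iInter]
    rw [hrw]
    refine isClosed_iInter fun i => isClosed_iInter fun k => isClosed_eq ?_ continuous_const
    exact continuous_finset_sum _ fun m _ =>
      (Continuous.mul (f := fun q : Y => q.1 i m) (g := fun q : Y => q.2 m k)
        ((continuous_apply m).comp ((continuous_apply i).comp continuous_fst))
        ((continuous_apply k).comp ((continuous_apply m).comp continuous_snd)))
  have hTcl : IsClosed T := by
    have hrw : T = (S ∩ F ⁻¹' Set.Iic (c0 + 1)) ∩
        ⋂ (m : Fin M), ({q : Y | nPhi (fun i => q.1 i m) ≤ B} ∩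
          {q : Y | nA (fun k => q.2 m k) ≤ B}) := by
      ext q
      simp only [hT_def, Set.mem_setOf_eq, Set.mem_inter_iff, Set.mem_preimage,
        Set.mem_Iic, Set.mem_iInter, forall_and]
      tauto
    rw [hrw]
    refine ((hScl.inter (isClosed_Iic.preimage hFcont)).inter
      (isClosed_iInter fun m => IsClosed.inter ?_ ?_))
    · exact isClosed_le (hcontP m) continuous_const
    · exact isClosed_le (hcontA m) continuous_const
  -- T is bounded
  have hTbd : Bornology.IsBounded T := by
    rw [isBounded_iff_forall_norm_le]
    refine ⟨max (CP * B) (CA * B), fun q hq => ?_⟩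
    obtain ⟨hqS, hqF, hqb⟩ := hq
    rw [Prod.norm_def]
    refine max_le_max ?_ ?_
    · rw [pi_norm_le_iff_of_nonneg (by positivity)]
      intro i
      rw [pi_norm_le_iff_of_nonneg (by positivity)]
      intro m
      calc ‖q.1 i m‖ ≤ ‖fun i' => q.1 i' m‖ := norm_le_pi_norm (fun i' => q.1 i' m) i
        _ ≤ CP * nPhi (fun i' => q.1 i' m) := hCP _
        _ ≤ CP * B := by
            have := (hqb m).1
            exact mul_le_mul_of_nonneg_left this hCPpos.le
    · rw [pi_norm_le_iff_of_nonneg (by positivity)]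
      intro m
      rw [pi_norm_le_iff_of_nonneg (by positivity)]
      intro k
      calc ‖q.2 m k‖ ≤ ‖fun k' => q.2 m k'‖ := norm_le_pi_norm (fun k' => q.2 m k') k
        _ ≤ CA * nA (fun k' => q.2 m k') := hCA _
        _ ≤ CA * B := mul_le_mul_of_nonneg_left (hqb m).2 hCApos.le
  have hTcomp : IsCompact T := Metric.isCompact_of_isClosed_isBounded hTcl hTbd
  obtain ⟨qm, hqmT, hqmmin⟩ := hTcomp.exists_isMinOn hTne hFcont.continuousOn
  -- qm minimizes F over all of S
  have hglobal : ∀ q ∈ S, F qm ≤ F q := by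
    intro q hq
    obtain ⟨q', hq'S, hq'F, hq'bal⟩ := hbalS q hq
    by_cases hcase : F q' ≤ c0 + 1
    · have hq'T : q' ∈ T := hbound q' hq'S hcase hq'bal
      calc F qm ≤ F q' := hqmmin hq'T
        _ = F q := hq'F
    · push_neg at hcase
      have h1 : F qm ≤ c0 + 1 := hqmT.2.1
      have h2 : F q' = F q := hq'F
      linarith
  refine ⟨Matrix.of qm.1, Matrix.of qm.2, ?_, ?_⟩
  · ext i k
    rw [Matrix.mul_apply]
    exact hqmT.1 i k
  · refine le_antisymm ?_ (psi_le qm hqmT.1)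
    exact le_psi qm hglobal
end

section
/- If both n_Φ and n_A are the Euclidean (ℓ2) norms, then for every M ≥ min(p, K) and every X ∈ ℝ^{p×K}, ψ^M(X) equals the nuclear norm of X, i.e. ψ^M(X) = trace(√(XᵀX)), where √(XᵀX) is the positive semidefinite square root of the positive semidefinite matrix XᵀX. -/
open scoped ENNReal
open Matrix

/-- `ψ^M(X)` with both norms being the Euclidean (ℓ2) norm: the infimum of
`∑_{m=1}^M ‖Φ_m‖₂ · ‖(A_{m,:})ᵀ‖₂` over all factorisations `Φ · A = X`. -/
noncomputable def psiL2 (p K M : ℕ) (X : Matrix (Fin p) (Fin K) ℝ) : ℝ≥0∞ :=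
  ⨅ (Φ : Matrix (Fin p) (Fin M) ℝ) (A : Matrix (Fin M) (Fin K) ℝ) (_ : Φ * A = X),
    ENNReal.ofReal (∑ m : Fin M,
      Real.sqrt (∑ i, (Φ i m) ^ 2) * Real.sqrt (∑ k, (A m k) ^ 2))

/-- Cauchy–Schwarz for finite sums, square-root form. -/
lemma aux_cs {n : Type*} [Fintype n] (f g : n → ℝ) :
    ∑ i, f i * g i ≤ Real.sqrt (∑ i, f i ^ 2) * Real.sqrt (∑ i, g i ^ 2) := by
  have h := Finset.sum_mul_sq_le_sq_mul_sq Finset.univ f g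
  calc ∑ i, f i * g i ≤ |∑ i, f i * g i| := le_abs_self _
    _ = Real.sqrt ((∑ i, f i * g i) ^ 2) := (Real.sqrt_sq_eq_abs _).symm
    _ ≤ Real.sqrt ((∑ i, f i ^ 2) * ∑ i, g i ^ 2) := Real.sqrt_le_sqrt h
    _ = _ := Real.sqrt_mul (by positivity) _

/-- Bessel's inequality in coordinates. -/
lemma aux_bessel {n : ℕ} {ι : Type*} [Fintype ι] (w : ι → EuclideanSpace ℝ (Fin n))
    (hw : Orthonormal ℝ w) (x : Fin n → ℝ) :
    ∑ i, (∑ j, x j * w i j) ^ 2 ≤ ∑ j, x j ^ 2 := by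
  set y : EuclideanSpace ℝ (Fin n) := (WithLp.equiv 2 _).symm x with hy
  have hyj : ∀ j, y j = x j := fun j => rfl
  have h := hw.sum_inner_products_le (𝕜 := ℝ) y (s := Finset.univ)
  have hn : ‖y‖ ^ 2 = ∑ j, x j ^ 2 := by
    rw [EuclideanSpace.norm_eq, Real.sq_sqrt (Finset.sum_nonneg fun _ _ => sq_nonneg _)]
    simp [hyj]
  rw [hn] at h
  refine le_trans (le_of_eq ?_) h
  refine Finset.sum_congr rfl fun i _ => ?_
  rw [Real.norm_eq_abs, sq_abs]
  congr 1

/-- If both `n_Φ` and `n_A` are the Euclidean norms, then for every `M ≥ min(p, K)`,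
`ψ^M(X)` equals the nuclear norm `trace(√(XᵀX))`, where `S = √(XᵀX)` is the (unique)
positive semidefinite square root of the positive semidefinite matrix `XᵀX`. -/
theorem psiL2_eq_nuclearNorm (p K M : ℕ) (hM : min p K ≤ M)
    (X : Matrix (Fin p) (Fin K) ℝ)
    (S : Matrix (Fin K) (Fin K) ℝ) (hS : S.PosSemidef) (hSsq : S * S = Xᵀ * X) :
    psiL2 p K M X = ENNReal.ofReal S.trace := by
  classical
  have hX : Xᴴ = Xᵀ := conjTranspose_eq_transpose_of_trivial X
  have hpsd : (Xᵀ * X).PosSemidef := hX ▸ posSemidef_conjTranspose_mul_self X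
  have hH := hpsd.1
  set μ : Fin K → ℝ := hH.eigenvalues with hμdef
  set v := hH.eigenvectorBasis with hvdef
  have hμ0 : ∀ i, 0 ≤ μ i := hpsd.eigenvalues_nonneg
  have hXv : ∀ i, (Xᵀ * X) *ᵥ ⇑(v i) = μ i • ⇑(v i) := hH.mulVec_eigenvectorBasis
  have hUo : (hH.eigenvectorUnitary : Matrix (Fin K) (Fin K) ℝ) *
      star (hH.eigenvectorUnitary : Matrix (Fin K) (Fin K) ℝ) = 1 :=
    (Matrix.mem_unitaryGroup_iff).mp (hH.eigenvectorUnitary).2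
  have hUo' : star (hH.eigenvectorUnitary : Matrix (Fin K) (Fin K) ℝ) *
      (hH.eigenvectorUnitary : Matrix (Fin K) (Fin K) ℝ) = 1 :=
    (Matrix.mem_unitaryGroup_iff').mp (hH.eigenvectorUnitary).2
  have hv_orth : ∀ i j, (∑ k, v i k * v j k) = if i = j then 1 else 0 := by
    intro i j
    have := congrFun (congrFun hUo' i) j
    simp [Matrix.mul_apply, Matrix.star_apply, Matrix.one_apply,
      hH.eigenvectorUnitary_apply] at this
    convert this using 1
  have hv_complete : ∀ k l, (∑ i, v i k * v i l) = if k = l then 1 else 0 := by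
    intro k l
    have := congrFun (congrFun hUo k) l
    simp [Matrix.mul_apply, Matrix.star_apply, Matrix.one_apply,
      hH.eigenvectorUnitary_apply] at this
    convert this using 1
  -- dot products of images of eigenvectors
  have hdot : ∀ i j, (∑ a, (X *ᵥ ⇑(v i)) a * (X *ᵥ ⇑(v j)) a) = if i = j then μ i else 0 := by
    intro i j
    have h1 : (X *ᵥ ⇑(v i)) ⬝ᵥ (X *ᵥ ⇑(v j)) = ⇑(v i) ⬝ᵥ ((Xᵀ * X) *ᵥ ⇑(v j)) := by
      rw [← mulVec_mulVec, dotProduct_mulVec ⇑(v i) Xᵀ, vecMul_transpose]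
    calc ∑ a, (X *ᵥ ⇑(v i)) a * (X *ᵥ ⇑(v j)) a
        = ⇑(v i) ⬝ᵥ ((Xᵀ * X) *ᵥ ⇑(v j)) := h1
      _ = μ j * ∑ k, v i k * v j k := by
          rw [hXv j, dotProduct_smul, smul_eq_mul]; rfl
      _ = if i = j then μ i else 0 := by
          rw [hv_orth i j]
          by_cases h : i = j
          · subst h; simp
          · simp [h]
  -- trace of S
  have htrace : S.trace = ∑ i, Real.sqrt (μ i) := by
    have hSt : Sᵀ = S := by rw [← conjTranspose_eq_transpose_of_trivial]; exact hS.1.eq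
    have hSv : ∀ i, S *ᵥ ⇑(v i) = Real.sqrt (μ i) • ⇑(v i) := by
      intro i
      set s := Real.sqrt (μ i) with hs
      have hss : s * s = μ i := Real.mul_self_sqrt (hμ0 i)
      set w := S *ᵥ ⇑(v i) - s • ⇑(v i) with hw
      have hSw : S *ᵥ w = (-s) • w := by
        rw [hw, mulVec_sub, mulVec_smul, mulVec_mulVec, hSsq, hXv i, ← hss]
        ext k
        simp only [Pi.sub_apply, Pi.smul_apply, smul_eq_mul]
        ring
      have hnn : 0 ≤ w ⬝ᵥ (S *ᵥ w) := by simpa using hS.dotProduct_mulVec_nonneg w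
      rw [hSw, dotProduct_smul, smul_eq_mul] at hnn
      have hww : 0 ≤ w ⬝ᵥ w := by
        simp only [dotProduct]; exact Finset.sum_nonneg fun k _ => mul_self_nonneg _
      rcases eq_or_lt_of_le (Real.sqrt_nonneg (μ i)) with h0 | hpos
      · have hs0 : s = 0 := h0.symm
        have hSSv : S *ᵥ (S *ᵥ ⇑(v i)) = 0 := by
          rw [mulVec_mulVec, hSsq, hXv i, ← hss, hs0]; simp
        have hT := vecMul_transpose S (S *ᵥ ⇑(v i))
        rw [hSt] at hT
        have hd : (S *ᵥ ⇑(v i)) ⬝ᵥ (S *ᵥ ⇑(v i)) = 0 := by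
          rw [dotProduct_mulVec, hT, hSSv, zero_dotProduct]
        rw [dotProduct_self_eq_zero.mp hd, hs0, zero_smul]
      · have hd : w ⬝ᵥ w = 0 := by nlinarith
        exact sub_eq_zero.mp (dotProduct_self_eq_zero.mp hd)
    have hdiag : ∀ k, S k k = ∑ l, S k l * ∑ i, v i k * v i l := by
      intro k; simp_rw [hv_complete]; simp
    have htr : S.trace = ∑ i, ∑ k, v i k * ∑ l, S k l * v i l := by
      rw [Matrix.trace]
      simp only [Matrix.diag]
      simp_rw [hdiag, Finset.mul_sum]
      calc ∑ k, ∑ l, ∑ i, S k l * (v i k * v i l)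
          = ∑ k, ∑ i, ∑ l, v i k * (S k l * v i l) :=
            Finset.sum_congr rfl fun k _ => by
              rw [Finset.sum_comm]
              exact Finset.sum_congr rfl fun i _ => Finset.sum_congr rfl fun l _ => by ring
        _ = _ := Finset.sum_comm
    rw [htr]
    refine Finset.sum_congr rfl fun i _ => ?_
    have h1 := congrFun (hSv i)
    calc ∑ k, v i k * ∑ l, S k l * v i l
        = ∑ k, Real.sqrt (μ i) * (v i k * v i k) :=
          Finset.sum_congr rfl fun k _ => by
            have h2 : ∑ l, S k l * v i l = Real.sqrt (μ i) * v i k := h1 k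
            rw [h2]; ring
      _ = Real.sqrt (μ i) := by rw [← Finset.mul_sum, hv_orth i i]; simp
  -- zero eigenvalue implies zero image
  have hXv0 : ∀ i, μ i = 0 → X *ᵥ ⇑(v i) = 0 := by
    intro i h0
    have h1 := hdot i i
    rw [if_pos rfl, h0] at h1
    have h2 : ∑ a, (X *ᵥ ⇑(v i)) a ^ 2 = 0 := by
      rw [← h1]; exact Finset.sum_congr rfl fun a _ => sq ((X *ᵥ ⇑(v i)) a)
    funext a
    have := (Finset.sum_eq_zero_iff_of_nonneg (fun a _ => sq_nonneg ((X *ᵥ ⇑(v i)) a))).mp h2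
      a (Finset.mem_univ a)
    exact pow_eq_zero_iff (two_ne_zero) |>.mp this
  -- the weights
  set c : Fin K → ℝ := fun i => if μ i = 0 then 0 else (Real.sqrt (μ i))⁻¹ with hcdef
  have hc : ∀ i, c i * μ i = Real.sqrt (μ i) := by
    intro i
    by_cases h : μ i = 0
    · simp [hcdef, h]
    · have hs : Real.sqrt (μ i) ≠ 0 :=
        Real.sqrt_ne_zero'.mpr (lt_of_le_of_ne (hμ0 i) (Ne.symm h))
      rw [hcdef]; simp only [if_neg h]
      rw [inv_mul_eq_div, div_eq_iff hs]
      exact (Real.mul_self_sqrt (hμ0 i)).symm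
  -- lower bound
  have hlow : ∀ (Φ : Matrix (Fin p) (Fin M) ℝ) (A : Matrix (Fin M) (Fin K) ℝ), Φ * A = X →
      ∑ i, Real.sqrt (μ i) ≤
        ∑ m, Real.sqrt (∑ j, Φ j m ^ 2) * Real.sqrt (∑ k, A m k ^ 2) := by
    intro Φ A hΦA
    -- orthonormal family in ℝ^p
    set u : {i : Fin K // μ i ≠ 0} → EuclideanSpace ℝ (Fin p) :=
      fun i => (WithLp.equiv 2 _).symm (fun a => c i.1 * (X *ᵥ ⇑(v i.1)) a) with hudef
    have huapp : ∀ i a, u i a = c i.1 * (X *ᵥ ⇑(v i.1)) a := fun i a => rfl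
    have hu_on : Orthonormal ℝ u := by
      rw [orthonormal_iff_ite]
      intro i j
      have h1 : (inner ℝ (u i) (u j) : ℝ) =
          c i.1 * c j.1 * ∑ a, (X *ᵥ ⇑(v i.1)) a * (X *ᵥ ⇑(v j.1)) a := by
        rw [Finset.mul_sum]
        simp only [PiLp.inner_apply, RCLike.inner_apply, starRingEnd_apply, star_trivial, huapp]
        exact Finset.sum_congr rfl fun a _ => by ring
      rw [h1, hdot]
      by_cases h : i = j
      · subst h
        rw [if_pos rfl, if_pos rfl]
        have h2 : Real.sqrt (μ i.1) * Real.sqrt (μ i.1) = μ i.1 := Real.mul_self_sqrt (hμ0 i.1)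
        have hs : Real.sqrt (μ i.1) ≠ 0 :=
          Real.sqrt_ne_zero'.mpr (lt_of_le_of_ne (hμ0 i.1) (Ne.symm i.2))
        rw [hcdef]; simp only [if_neg i.2]
        field_simp
        linarith [h2]
      · rw [if_neg (fun hc' => h (Subtype.ext hc')), if_neg h]
        ring
    -- key pointwise identity
    have key : ∀ i, Real.sqrt (μ i) =
        ∑ m, (c i * ∑ j, Φ j m * (X *ᵥ ⇑(v i)) j) * (∑ k, A m k * v i k) := by
      intro i
      have hAv : ∀ m, (A *ᵥ ⇑(v i)) m = ∑ k, A m k * v i k := fun m => rfl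
      have hXexp : ∀ j, (X *ᵥ ⇑(v i)) j = ∑ m, Φ j m * (A *ᵥ ⇑(v i)) m := by
        intro j
        rw [← hΦA, ← mulVec_mulVec]
        rfl
      symm
      calc ∑ m, (c i * ∑ j, Φ j m * (X *ᵥ ⇑(v i)) j) * (∑ k, A m k * v i k)
          = c i * ∑ m, (∑ j, Φ j m * (X *ᵥ ⇑(v i)) j) * (A *ᵥ ⇑(v i)) m := by
            rw [Finset.mul_sum]
            exact Finset.sum_congr rfl fun m _ => by rw [hAv]; ring
        _ = c i * ∑ m, ∑ j, (Φ j m * (A *ᵥ ⇑(v i)) m) * (X *ᵥ ⇑(v i)) j := by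
            congr 1
            exact Finset.sum_congr rfl fun m _ => by
              rw [Finset.sum_mul]
              exact Finset.sum_congr rfl fun j _ => by ring
        _ = c i * ∑ j, (∑ m, Φ j m * (A *ᵥ ⇑(v i)) m) * (X *ᵥ ⇑(v i)) j := by
            rw [Finset.sum_comm]
            congr 1
            exact Finset.sum_congr rfl fun j _ => (Finset.sum_mul _ _ _).symm
        _ = c i * ∑ j, (X *ᵥ ⇑(v i)) j * (X *ᵥ ⇑(v i)) j := by
            congr 1
            exact Finset.sum_congr rfl fun j _ => by rw [← hXexp j]
        _ = c i * μ i := by rw [hdot i i, if_pos rfl]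
        _ = Real.sqrt (μ i) := hc i
    calc ∑ i, Real.sqrt (μ i)
        = ∑ i, ∑ m, (c i * ∑ j, Φ j m * (X *ᵥ ⇑(v i)) j) * (∑ k, A m k * v i k) :=
          Finset.sum_congr rfl fun i _ => key i
      _ = ∑ m, ∑ i, (c i * ∑ j, Φ j m * (X *ᵥ ⇑(v i)) j) * (∑ k, A m k * v i k) :=
          Finset.sum_comm
      _ ≤ ∑ m, Real.sqrt (∑ j, Φ j m ^ 2) * Real.sqrt (∑ k, A m k ^ 2) := by
          refine Finset.sum_le_sum fun m _ => ?_
          set g : Fin K → ℝ := fun i => c i * ∑ j, Φ j m * (X *ᵥ ⇑(v i)) j with hgdef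
          set h : Fin K → ℝ := fun i => ∑ k, A m k * v i k with hhdef
          have cs := aux_cs g h
          refine cs.trans ?_
          have hg : ∑ i, g i ^ 2 ≤ ∑ j, Φ j m ^ 2 := by
            have hfil : ∑ i, g i ^ 2 = ∑ i ∈ Finset.univ.filter (fun i => μ i ≠ 0), g i ^ 2 := by
              symm
              refine Finset.sum_filter_of_ne fun i _ hne => ?_
              intro h0
              apply hne
              rw [hgdef]; simp [hcdef, h0]
            have hsub : ∑ i ∈ Finset.univ.filter (fun i => μ i ≠ 0), g i ^ 2
                = ∑ i : {i : Fin K // μ i ≠ 0}, g i.1 ^ 2 :=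
              Finset.sum_subtype _ (by simp) _
            rw [hfil, hsub]
            have hb := aux_bessel u hu_on (fun j => Φ j m)
            refine le_trans (le_of_eq ?_) hb
            refine Finset.sum_congr rfl fun i _ => ?_
            congr 1
            show c i.1 * ∑ j, Φ j m * (X *ᵥ ⇑(v i.1)) j = ∑ j, Φ j m * u i j
            rw [Finset.mul_sum]
            exact Finset.sum_congr rfl fun j _ => by rw [huapp]; ring
          have hh : ∑ i, h i ^ 2 ≤ ∑ k, A m k ^ 2 := by
            have hb := aux_bessel (fun i => (v i : EuclideanSpace ℝ (Fin K)))
              v.orthonormal (fun k => A m k)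
            exact hb
          exact mul_le_mul (Real.sqrt_le_sqrt hg) (Real.sqrt_le_sqrt hh)
            (Real.sqrt_nonneg _) (Real.sqrt_nonneg _)
  -- upper bound: construct an optimal factorisation
  have hcard : Fintype.card {i : Fin K // μ i ≠ 0} ≤ M := by
    have h1 : (Xᵀ * X).rank = Fintype.card {i : Fin K // μ i ≠ 0} :=
      hH.rank_eq_card_non_zero_eigs
    have h2 : (Xᵀ * X).rank = X.rank := rank_transpose_mul_self X
    have h3 : X.rank ≤ min p K := le_min X.rank_le_height X.rank_le_width
    omega
  obtain ⟨e⟩ : Nonempty ({i : Fin K // μ i ≠ 0} ↪ Fin M) :=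
    Function.Embedding.nonempty_of_card_le (by simpa using hcard)
  set Φ₀ : Matrix (Fin p) (Fin M) ℝ :=
    Matrix.of fun j m => ∑ i : {i : Fin K // μ i ≠ 0},
      if e i = m then (X *ᵥ ⇑(v i.1)) j else 0 with hΦ₀def
  set A₀ : Matrix (Fin M) (Fin K) ℝ :=
    Matrix.of fun m k => ∑ i : {i : Fin K // μ i ≠ 0},
      if e i = m then v i.1 k else 0 with hA₀def
  have hΦe : ∀ (i : {i : Fin K // μ i ≠ 0}) j, Φ₀ j (e i) = (X *ᵥ ⇑(v i.1)) j := by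
    intro i j
    rw [hΦ₀def]
    simp [e.injective.eq_iff]
  have hAe : ∀ (i : {i : Fin K // μ i ≠ 0}) k, A₀ (e i) k = v i.1 k := by
    intro i k
    rw [hA₀def]
    simp [e.injective.eq_iff]
  have hΦ0 : ∀ m, (∀ i : {i : Fin K // μ i ≠ 0}, e i ≠ m) → ∀ j, Φ₀ j m = 0 := by
    intro m hm j
    show (∑ i : {i : Fin K // μ i ≠ 0}, if e i = m then (X *ᵥ ⇑(v i.1)) j else 0) = 0
    exact Finset.sum_eq_zero fun i _ => if_neg (hm i)
  have hA0 : ∀ m, (∀ i : {i : Fin K // μ i ≠ 0}, e i ≠ m) → ∀ k, A₀ m k = 0 := by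
    intro m hm k
    show (∑ i : {i : Fin K // μ i ≠ 0}, if e i = m then v i.1 k else 0) = 0
    exact Finset.sum_eq_zero fun i _ => if_neg (hm i)
  have hterm : ∀ m j k, Φ₀ j m * A₀ m k = ∑ i : {i : Fin K // μ i ≠ 0},
      if e i = m then (X *ᵥ ⇑(v i.1)) j * v i.1 k else 0 := by
    intro m j k
    by_cases hm : ∃ i : {i : Fin K // μ i ≠ 0}, e i = m
    · obtain ⟨i0, rfl⟩ := hm
      rw [hΦe i0 j, hAe i0 k]
      symm
      simp [e.injective.eq_iff]
    · push_neg at hm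
      rw [hΦ0 m hm j, zero_mul]
      symm
      exact Finset.sum_eq_zero fun i _ => if_neg (hm i)
  have hmulX : Φ₀ * A₀ = X := by
    ext j k
    rw [mul_apply]
    calc ∑ m, Φ₀ j m * A₀ m k
        = ∑ m, ∑ i : {i : Fin K // μ i ≠ 0},
            (if e i = m then (X *ᵥ ⇑(v i.1)) j * v i.1 k else 0) :=
          Finset.sum_congr rfl fun m _ => hterm m j k
      _ = ∑ i : {i : Fin K // μ i ≠ 0}, ∑ m,
            (if e i = m then (X *ᵥ ⇑(v i.1)) j * v i.1 k else 0) := Finset.sum_comm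
      _ = ∑ i : {i : Fin K // μ i ≠ 0}, (X *ᵥ ⇑(v i.1)) j * v i.1 k := by
          refine Finset.sum_congr rfl fun i _ => ?_
          simp
      _ = ∑ i : Fin K, (X *ᵥ ⇑(v i)) j * v i k := by
          rw [← Finset.sum_subtype (Finset.univ.filter (fun i : Fin K => μ i ≠ 0)) (by simp)
            (fun i => (X *ᵥ ⇑(v i)) j * v i k)]
          refine Finset.sum_filter_of_ne fun i _ hne => ?_
          intro h0
          apply hne
          rw [hXv0 i h0]
          simp
      _ = X j k := by
          simp only [mulVec, dotProduct]
          calc ∑ i : Fin K, (∑ l, X j l * v i l) * v i k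
              = ∑ i : Fin K, ∑ l, (X j l) * (v i l * v i k) := by
                refine Finset.sum_congr rfl fun i _ => ?_
                rw [Finset.sum_mul]
                exact Finset.sum_congr rfl fun l _ => by ring
            _ = ∑ l, (X j l) * ∑ i : Fin K, v i l * v i k := by
                rw [Finset.sum_comm]
                exact Finset.sum_congr rfl fun l _ => (Finset.mul_sum _ _ _).symm
            _ = X j k := by
                simp_rw [hv_complete]
                simp
  have hcost : ∑ m, Real.sqrt (∑ j, Φ₀ j m ^ 2) * Real.sqrt (∑ k, A₀ m k ^ 2)
      = ∑ i, Real.sqrt (μ i) := by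
    have hvanish : ∀ m ∈ Finset.univ, m ∉ Finset.univ.map e →
        Real.sqrt (∑ j, Φ₀ j m ^ 2) * Real.sqrt (∑ k, A₀ m k ^ 2) = 0 := by
      intro m _ hm
      have hm' : ∀ i : {i : Fin K // μ i ≠ 0}, e i ≠ m := by
        intro i hi
        exact hm (Finset.mem_map.mpr ⟨i, Finset.mem_univ i, hi⟩)
      have h1 : ∑ j, Φ₀ j m ^ 2 = 0 :=
        Finset.sum_eq_zero fun j _ => by rw [hΦ0 m hm' j]; ring
      rw [h1, Real.sqrt_zero, zero_mul]
    rw [← Finset.sum_subset (Finset.subset_univ (Finset.univ.map e)) hvanish, Finset.sum_map]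
    have hterm' : ∀ i : {i : Fin K // μ i ≠ 0},
        Real.sqrt (∑ j, Φ₀ j (e i) ^ 2) * Real.sqrt (∑ k, A₀ (e i) k ^ 2)
          = Real.sqrt (μ i.1) := by
      intro i
      have h1 : ∑ j, Φ₀ j (e i) ^ 2 = μ i.1 := by
        calc ∑ j, Φ₀ j (e i) ^ 2
            = ∑ j, (X *ᵥ ⇑(v i.1)) j * (X *ᵥ ⇑(v i.1)) j :=
              Finset.sum_congr rfl fun j _ => by rw [hΦe i j, sq]
          _ = μ i.1 := by rw [hdot i.1 i.1]; simp
      have h2 : ∑ k, A₀ (e i) k ^ 2 = 1 := by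
        calc ∑ k, A₀ (e i) k ^ 2
            = ∑ k, v i.1 k * v i.1 k :=
              Finset.sum_congr rfl fun k _ => by rw [hAe i k, sq]
          _ = 1 := by rw [hv_orth i.1 i.1]; simp
      rw [h1, h2, Real.sqrt_one, mul_one]
    rw [Finset.sum_congr rfl fun i _ => hterm' i]
    rw [← Finset.sum_subtype (Finset.univ.filter (fun i : Fin K => μ i ≠ 0)) (by simp)
      (fun i => Real.sqrt (μ i))]
    refine Finset.sum_filter_of_ne fun i _ hne => ?_
    intro h0
    apply hne
    rw [h0, Real.sqrt_zero]
  -- conclude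
  rw [htrace]
  apply le_antisymm
  · have h1 : psiL2 p K M X ≤ ENNReal.ofReal
        (∑ m, Real.sqrt (∑ j, Φ₀ j m ^ 2) * Real.sqrt (∑ k, A₀ m k ^ 2)) := by
      refine iInf_le_of_le Φ₀ ?_
      refine iInf_le_of_le A₀ ?_
      exact iInf_le _ hmulX
    rwa [hcost] at h1
  · refine le_iInf fun Φ => le_iInf fun A => le_iInf fun hΦA => ?_
    exact ENNReal.ofReal_le_ofReal (hlow Φ A hΦA)
end

section
/- (Moreau decomposition for norms; prox via dual-ball projection) Let E be a finite-dimensional real inner product space, ω a norm on E, s > 0 and y ∈ E. Let B = {z ∈ E : ω*(z) ≤ s}, where ω*(z) = sup{⟨z, x⟩ : x ∈ E, ω(x) ≤ 1}. Then there is a unique point q ∈ B minimizing ‖y − ·‖ over B (the metric projection of y onto B), and x* := y − q is the unique global minimizer of x ↦ (1/2)·‖x − y‖² + s·ω(x) on E; that is, prox_{sω}(y) = y − proj_{ω* ≤ s}(y). -/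
open scoped RealInnerProductSpace

private def NSyn (E : Type*) := E

lemma normEquivAux {E : Type*} [NormedAddCommGroup E] [NormedSpace ℝ E] [FiniteDimensional ℝ E]
    (ω : E → ℝ)
    (hω_add : ∀ x y, ω (x + y) ≤ ω x + ω y)
    (hω_smul : ∀ (c : ℝ) (x), ω (c • x) = |c| * ω x)
    (hω_def : ∀ x, ω x = 0 ↔ x = 0) :
    ∃ C : ℝ, 0 < C ∧ (∀ x, ω x ≤ C * ‖x‖) ∧ (∀ x, ‖x‖ ≤ C * ω x) := by
  have hω0 : ω 0 = 0 := (hω_def 0).2 rfl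
  letI : AddCommGroup (NSyn E) := inferInstanceAs (AddCommGroup E)
  letI : Module ℝ (NSyn E) := inferInstanceAs (Module ℝ E)
  let n : AddGroupNorm (NSyn E) :=
    { toFun := ω
      map_zero' := hω0
      add_le' := hω_add
      neg' := fun x => by
        have h := hω_smul (-1) (show E from x)
        rw [neg_one_smul, abs_neg, abs_one, one_mul] at h
        exact h
      eq_zero_of_map_eq_zero' := fun x hx => (hω_def x).1 hx }
  letI : NormedAddCommGroup (NSyn E) := n.toNormedAddCommGroup
  letI : NormedSpace ℝ (NSyn E) :=
    { norm_smul_le := fun c x => le_of_eq <| by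
        show ω (c • x) = ‖c‖ * ω x
        rw [Real.norm_eq_abs]; exact hω_smul c x }
  let e : E ≃ₗ[ℝ] NSyn E :=
    { toFun := fun x => x
      invFun := fun x => x
      map_add' := fun _ _ => rfl
      map_smul' := fun _ _ => rfl
      left_inv := fun _ => rfl
      right_inv := fun _ => rfl }
  haveI : FiniteDimensional ℝ (NSyn E) := e.finiteDimensional
  have h1 : Continuous e.toLinearMap := e.toLinearMap.continuous_of_finiteDimensional
  have h2 : Continuous e.symm.toLinearMap := e.symm.toLinearMap.continuous_of_finiteDimensional
  let f1 : E →L[ℝ] NSyn E := ⟨e.toLinearMap, h1⟩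
  let f2 : NSyn E →L[ℝ] E := ⟨e.symm.toLinearMap, h2⟩
  obtain ⟨C1, hC1, hf1⟩ := f1.bound
  obtain ⟨C2, hC2, hf2⟩ := f2.bound
  refine ⟨C1 + C2, by linarith, fun x => ?_, fun x => ?_⟩
  · have := hf1 x
    have hx : ‖f1 x‖ = ω x := rfl
    nlinarith [norm_nonneg x]
  · have := hf2 (e x)
    have hx : ‖f2 (e x)‖ = ‖x‖ := rfl
    have hy : ‖(e x : NSyn E)‖ = ω x := rfl
    nlinarith [hy ▸ norm_nonneg (e x : NSyn E)]

lemma supportAux {E : Type*} [NormedAddCommGroup E] [InnerProductSpace ℝ E]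
    [FiniteDimensional ℝ E]
    (ω : E → ℝ)
    (hω_add : ∀ x y, ω (x + y) ≤ ω x + ω y)
    (hω_smul : ∀ (c : ℝ) (x), ω (c • x) = |c| * ω x)
    (hω_def : ∀ x, ω x = 0 ↔ x = 0) (x : E) :
    ∃ z : E, ⟪z, x⟫ = ω x ∧ ∀ v, ⟪z, v⟫ ≤ ω v := by
  have hω_nonneg : ∀ v, 0 ≤ ω v := by
    intro v
    have h1 : ω (-v) = ω v := by simpa using hω_smul (-1) v
    have h2 := hω_add v (-v)
    rw [add_neg_cancel, (hω_def 0).2 rfl, h1] at h2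
    linarith
  rcases eq_or_ne x 0 with rfl | hx0
  · exact ⟨0, by simp [(hω_def 0).2 rfl], fun v => by simpa using hω_nonneg v⟩
  · set f : E →ₗ.[ℝ] ℝ := LinearPMap.mkSpanSingleton x (ω x) hx0 with hf
    obtain ⟨g, hg1, hg2⟩ := exists_extension_of_le_sublinear f ω
      (fun c hc v => by rw [hω_smul, abs_of_pos hc])
      hω_add
      (by
        rintro ⟨v, hv⟩
        rw [LinearPMap.domain_mkSpanSingleton, Submodule.mem_span_singleton] at hv
        obtain ⟨c, rfl⟩ := hv
        have : f ⟨c • x, by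
            rw [LinearPMap.domain_mkSpanSingleton]
            exact Submodule.mem_span_singleton.2 ⟨c, rfl⟩⟩ = c • (ω x) :=
          LinearPMap.mkSpanSingleton'_apply x (ω x) _ c _
        rw [this, hω_smul, smul_eq_mul]
        have := hω_nonneg x
        rcases le_or_gt 0 c with h | h
        · rw [abs_of_nonneg h]
        · rw [abs_of_neg h]; nlinarith)
    let G : E →L[ℝ] ℝ := LinearMap.toContinuousLinearMap g
    refine ⟨(InnerProductSpace.toDual ℝ E).symm G, ?_, fun v => ?_⟩
    · rw [InnerProductSpace.toDual_symm_apply]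
      have hxmem : x ∈ f.domain := by
        rw [LinearPMap.domain_mkSpanSingleton]
        exact Submodule.mem_span_singleton_self x
      have := hg1 ⟨x, hxmem⟩
      show g x = ω x
      rw [this]
      exact LinearPMap.mkSpanSingleton'_apply_self x (ω x) _ _
    · rw [InnerProductSpace.toDual_symm_apply]
      exact hg2 v

/-- (Moreau decomposition for norms; prox via dual-ball projection) Let `ω` be a norm on the
finite-dimensional real inner product space `E`, with dual norm
`ω*(z) = sup {⟪z, x⟫ : ω(x) ≤ 1}`, let `s > 0`, `y ∈ E`, and
`B = {z : ω*(z) ≤ s}`. Then there is a unique point `q ∈ B` minimizing `‖y − ·‖` over `B`,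
and `x* = y − q` is the unique global minimizer of `x ↦ (1/2)·‖x − y‖² + s·ω(x)`;
i.e. `prox_{sω}(y) = y − proj_{ω* ≤ s}(y)`. -/
theorem prox_norm_eq_sub_dual_ball_proj {E : Type*} [NormedAddCommGroup E]
    [InnerProductSpace ℝ E] [FiniteDimensional ℝ E]
    (ω : E → ℝ)
    (hω_add : ∀ x y, ω (x + y) ≤ ω x + ω y)
    (hω_smul : ∀ (c : ℝ) (x), ω (c • x) = |c| * ω x)
    (hω_def : ∀ x, ω x = 0 ↔ x = 0)
    (ωd : E → ℝ)
    (hωd : ∀ z, ωd z = sSup ((fun x => ⟪z, x⟫) '' {x : E | ω x ≤ 1}))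
    (s : ℝ) (hs : 0 < s) (y : E) :
    ∃ q : E,
      (ωd q ≤ s ∧ ∀ z : E, ωd z ≤ s → ‖y - q‖ ≤ ‖y - z‖) ∧
      (∀ q' : E, (ωd q' ≤ s ∧ ∀ z : E, ωd z ≤ s → ‖y - q'‖ ≤ ‖y - z‖) → q' = q) ∧
      (∀ x : E,
        (1 / 2) * ‖(y - q) - y‖ ^ 2 + s * ω (y - q) ≤ (1 / 2) * ‖x - y‖ ^ 2 + s * ω x) ∧
      (∀ x : E,
        (∀ x' : E, (1 / 2) * ‖x - y‖ ^ 2 + s * ω x ≤ (1 / 2) * ‖x' - y‖ ^ 2 + s * ω x') →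
        x = y - q) := by
  have hω0 : ω 0 = 0 := (hω_def 0).2 rfl
  have hω_nonneg : ∀ v, 0 ≤ ω v := by
    intro v
    have h1 : ω (-v) = ω v := by simpa using hω_smul (-1) v
    have h2 := hω_add v (-v)
    rw [add_neg_cancel, hω0, h1] at h2
    linarith
  obtain ⟨C, hC0, hCub, hClb⟩ := normEquivAux ω hω_add hω_smul hω_def
  -- basic facts about the sets defining ωd
  have h0mem : ∀ z : E, (0:ℝ) ∈ (fun x => ⟪z, x⟫) '' {x : E | ω x ≤ 1} :=
    fun z => ⟨0, by simp [hω0], by simp⟩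
  have hbdd : ∀ z : E, BddAbove ((fun x => ⟪z, x⟫) '' {x : E | ω x ≤ 1}) := by
    intro z
    refine ⟨‖z‖ * C, ?_⟩
    rintro r ⟨x, hx, rfl⟩
    have h1 : ⟪z, x⟫ ≤ ‖z‖ * ‖x‖ := real_inner_le_norm z x
    have h2 : ‖x‖ ≤ C * ω x := hClb x
    have h3 : ω x ≤ 1 := hx
    have h4 : ‖x‖ ≤ C := by nlinarith
    show ⟪z, x⟫ ≤ ‖z‖ * C
    exact le_trans h1 (mul_le_mul_of_nonneg_left h4 (norm_nonneg z))
  have hωd_nonneg : ∀ z, 0 ≤ ωd z := by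
    intro z
    rw [hωd]
    exact le_csSup (hbdd z) (h0mem z)
  have hωd_le : ∀ (z : E) (M : ℝ), 0 ≤ M → (∀ x, ω x ≤ 1 → ⟪z, x⟫ ≤ M) → ωd z ≤ M := by
    intro z M hM h
    rw [hωd]
    exact Real.sSup_le (by rintro r ⟨x, hx, rfl⟩; exact h x hx) hM
  have hzx : ∀ z x, ⟪z, x⟫ ≤ ωd z * ω x := by
    intro z x
    rcases eq_or_ne x 0 with rfl | hx0
    · simp [hω0]
    · have hωx : 0 < ω x := lt_of_le_of_ne (hω_nonneg x) fun h => hx0 ((hω_def x).1 h.symm)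
      have hu : ω ((ω x)⁻¹ • x) ≤ 1 := by
        rw [hω_smul, abs_of_pos (by positivity)]
        rw [inv_mul_cancel₀ hωx.ne']
      have h1 : ⟪z, (ω x)⁻¹ • x⟫ ≤ ωd z := by
        rw [hωd]
        exact le_csSup (hbdd z) ⟨_, hu, rfl⟩
      rw [real_inner_smul_right] at h1
      calc ⟪z, x⟫ = ω x * ((ω x)⁻¹ * ⟪z, x⟫) := by field_simp
        _ ≤ ω x * ωd z := by nlinarith
        _ = ωd z * ω x := mul_comm _ _
  have hωd_sub : ∀ a b : E, ωd (a - b) ≤ C * ‖a - b‖ := by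
    intro a b
    refine hωd_le _ _ (by positivity) fun x hx => ?_
    have h1 : ⟪a - b, x⟫ ≤ ‖a - b‖ * ‖x‖ := real_inner_le_norm _ _
    have h2 : ‖x‖ ≤ C * ω x := hClb x
    have h4 : ‖x‖ ≤ C := by nlinarith [hω_nonneg x]
    calc ⟪a - b, x⟫ ≤ ‖a - b‖ * ‖x‖ := h1
      _ ≤ ‖a - b‖ * C := mul_le_mul_of_nonneg_left h4 (norm_nonneg _)
      _ = C * ‖a - b‖ := mul_comm _ _
  have hωd_add : ∀ a b : E, ωd (a + b) ≤ ωd a + ωd b := by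
    intro a b
    refine hωd_le _ _ (add_nonneg (hωd_nonneg a) (hωd_nonneg b)) fun x hx => ?_
    rw [inner_add_left]
    have h1 : ⟪a, x⟫ ≤ ωd a :=
      le_trans (hzx a x) (mul_le_of_le_one_right (hωd_nonneg a) hx)
    have h2 : ⟪b, x⟫ ≤ ωd b :=
      le_trans (hzx b x) (mul_le_of_le_one_right (hωd_nonneg b) hx)
    linarith
  have hωd_smul : ∀ (t : ℝ) (a : E), 0 ≤ t → ωd (t • a) ≤ t * ωd a := by
    intro t a ht
    refine hωd_le _ _ (mul_nonneg ht (hωd_nonneg a)) fun x hx => ?_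
    rw [real_inner_smul_left]
    exact mul_le_mul_of_nonneg_left
      (le_trans (hzx a x) (mul_le_of_le_one_right (hωd_nonneg a) hx)) ht
  set B : Set E := {z : E | ωd z ≤ s} with hB
  have h0B : (0:E) ∈ B := by
    have : ωd 0 ≤ 0 := hωd_le 0 0 le_rfl fun x _ => by simp
    exact le_trans this hs.le
  have hBconv : Convex ℝ B := by
    intro a ha b hb ta tb hta htb htab
    have h1 := hωd_add (ta • a) (tb • b)
    have h2 := hωd_smul ta a hta
    have h3 := hωd_smul tb b htb
    simp only [hB, Set.mem_setOf_eq] at ha hb ⊢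
    nlinarith
  have hBclosed : IsClosed B := by
    have hcont : Continuous ωd := by
      rw [Metric.continuous_iff]
      intro a ε hε
      refine ⟨ε / C, by positivity, fun b hb => ?_⟩
      have h1 : ωd b ≤ ωd a + C * ‖b - a‖ := by
        have := hωd_add a (b - a)
        have h := hωd_sub b a
        simpa [add_sub_cancel] using le_trans (by simpa using hωd_add a (b - a)) (by linarith)
      have h2 : ωd a ≤ ωd b + C * ‖a - b‖ := by
        have := hωd_add b (a - b)
        have h := hωd_sub a b
        simpa [add_sub_cancel] using le_trans (by simpa using hωd_add b (a - b)) (by linarith)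
      rw [Real.dist_eq, abs_sub_lt_iff]
      rw [dist_eq_norm] at hb
      have hba : ‖a - b‖ = ‖b - a‖ := by rw [norm_sub_rev]
      have : C * ‖b - a‖ < ε := by
        calc C * ‖b - a‖ < C * (ε / C) := by
              apply mul_lt_mul_of_pos_left hb hC0
          _ = ε := by field_simp
      constructor <;> [skip; skip] <;> nlinarith [hba]
    exact IsClosed.preimage hcont isClosed_Iic
  obtain ⟨q, hqB, hqinf⟩ :=
    exists_norm_eq_iInf_of_complete_convex ⟨0, h0B⟩ hBclosed.isComplete hBconv y
  have hvar : ∀ w ∈ B, ⟪y - q, w - q⟫ ≤ 0 :=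
    (norm_eq_iInf_iff_real_inner_le_zero hBconv hqB).1 hqinf
  haveI : Nonempty B := ⟨⟨0, h0B⟩⟩
  have hbddb : BddBelow (Set.range fun w : B => ‖y - (w:E)‖) :=
    ⟨0, by rintro r ⟨w, rfl⟩; exact norm_nonneg _⟩
  have hqmin : ∀ z : E, ωd z ≤ s → ‖y - q‖ ≤ ‖y - z‖ := by
    intro z hz
    rw [hqinf]
    exact ciInf_le hbddb ⟨z, hz⟩
  -- key identity
  have hkey : ⟪q, y - q⟫ = s * ω (y - q) := by
    have hqs : ωd q ≤ s := hqB
    have hle : ⟪q, y - q⟫ ≤ s * ω (y - q) := by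
      have h1 := hzx q (y - q)
      nlinarith [hω_nonneg (y - q), mul_le_mul_of_nonneg_right hqs (hω_nonneg (y - q))]
    have hge : s * ω (y - q) ≤ ⟪q, y - q⟫ := by
      obtain ⟨z, hz1, hz2⟩ := supportAux ω hω_add hω_smul hω_def (y - q)
      have hzd : ωd z ≤ 1 := hωd_le z 1 zero_le_one fun x hx => le_trans (hz2 x) hx
      have hszB : (s • z) ∈ B := by
        have := hωd_smul s z hs.le
        simp only [hB, Set.mem_setOf_eq]
        nlinarith
      have := hvar (s • z) hszB
      rw [inner_sub_right, real_inner_smul_right] at this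
      have hinner : ⟪y - q, z⟫ = s⁻¹ * (s * ⟪y - q, z⟫) := by field_simp
      have hzyq : ⟪y - q, z⟫ = ω (y - q) := by rw [real_inner_comm]; exact hz1
      have hq2 : ⟪y - q, q⟫ = ⟪q, y - q⟫ := real_inner_comm _ _
      nlinarith
    linarith
  refine ⟨q, ⟨hqB, hqmin⟩, ?_, ?_, ?_⟩
  · -- uniqueness of projection
    intro q' ⟨hq'B, hq'min⟩
    have hq'inf : ‖y - q'‖ = ⨅ w : B, ‖y - (w:E)‖ := by
      refine le_antisymm (le_ciInf fun w => hq'min w w.2) (ciInf_le hbddb ⟨q', hq'B⟩)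
    have hvar' := (norm_eq_iInf_iff_real_inner_le_zero hBconv hq'B).1 hq'inf
    have h1 := hvar q' hq'B
    have h2 := hvar' q hqB
    have h3 : ⟪q' - q, q' - q⟫ ≤ 0 := by
      have e1 : ⟪y - q, q' - q⟫ - ⟪y - q', q' - q⟫ = ⟪q' - q, q' - q⟫ := by
        rw [← inner_sub_left]
        congr 1
        abel
      have e2 : ⟪y - q', q - q'⟫ = -⟪y - q', q' - q⟫ := by
        rw [show q - q' = -(q' - q) by abel, inner_neg_right]
      rw [e2] at h2
      linarith
    have := real_inner_self_nonpos.1 h3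
    rwa [sub_eq_zero] at this
  · -- minimality
    intro x
    have hqs : ωd q ≤ s := hqB
    have h1 : ⟪q, x⟫ ≤ s * ω x := by
      have := hzx q x
      nlinarith [mul_le_mul_of_nonneg_right hqs (hω_nonneg x)]
    have hexp : ‖x - y + q‖ ^ 2 = ‖x - y‖ ^ 2 + 2 * ⟪x - y, q⟫ + ‖q‖ ^ 2 :=
      norm_add_sq_real (x - y) q
    have h2 : ⟪x - y, q⟫ = ⟪q, x⟫ - ⟪q, y⟫ := by
      rw [real_inner_comm, inner_sub_right]
    have h3 : ⟪q, y - q⟫ = ⟪q, y⟫ - ‖q‖ ^ 2 := by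
      rw [inner_sub_right, real_inner_self_eq_norm_sq]
    have h4 : ‖(y - q) - y‖ = ‖q‖ := by rw [show (y - q) - y = -q by abel, norm_neg]
    rw [h4]
    nlinarith [sq_nonneg ‖x - y + q‖, hkey]
  · -- uniqueness of minimizer
    intro x hx
    have hqs : ωd q ≤ s := hqB
    have h1 : ⟪q, x⟫ ≤ s * ω x := by
      have := hzx q x
      nlinarith [mul_le_mul_of_nonneg_right hqs (hω_nonneg x)]
    have hexp : ‖x - y + q‖ ^ 2 = ‖x - y‖ ^ 2 + 2 * ⟪x - y, q⟫ + ‖q‖ ^ 2 :=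
      norm_add_sq_real (x - y) q
    have h2 : ⟪x - y, q⟫ = ⟪q, x⟫ - ⟪q, y⟫ := by
      rw [real_inner_comm, inner_sub_right]
    have h3 : ⟪q, y - q⟫ = ⟪q, y⟫ - ‖q‖ ^ 2 := by
      rw [inner_sub_right, real_inner_self_eq_norm_sq]
    have h4 : ‖(y - q) - y‖ = ‖q‖ := by rw [show (y - q) - y = -q by abel, norm_neg]
    have hmin := hx (y - q)
    rw [h4] at hmin
    have hz : ‖x - y + q‖ ^ 2 ≤ 0 := by nlinarith [hkey]
    have : ‖x - y + q‖ = 0 := by nlinarith [norm_nonneg (x - y + q), sq_nonneg ‖x - y + q‖]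
    have := norm_eq_zero.1 this
    have : x - y + q = 0 := this
    linear_combination (norm := abel) this
end

section
/- (Corollary 1, instantiated for norms) Let E be a finite-dimensional real inner product space, ω a norm on E with dual norm ω*(z) = sup{⟨z, x⟩ : ω(x) ≤ 1}, s > 0 and y ∈ E. Let q be the unique point of B* = {z ∈ E : ω*(z) ≤ 1} minimizing ‖y − ·‖ over B*, and let m be the unique global minimizer of x ↦ (1/2)·‖x − y/s‖² + (1/s)·ω(x) on E. Then y = q + s • m. -/
open scoped RealInnerProductSpace

section aux
variable {E : Type*} [NormedAddCommGroup E] [InnerProductSpace ℝ E] [FiniteDimensional ℝ E]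

lemma aux_norm_lower (ω : E → ℝ)
    (hadd : ∀ x y, ω (x + y) ≤ ω x + ω y)
    (hsmul : ∀ (c : ℝ) (x), ω (c • x) = |c| * ω x)
    (hdef : ∀ x, ω x = 0 ↔ x = 0) :
    ∃ c > 0, ∀ x, c * ‖x‖ ≤ ω x := by
  have hzero : ω 0 = 0 := (hdef 0).mpr rfl
  have hneg : ∀ x, ω (-x) = ω x := by
    intro x
    have := hsmul (-1) x
    simpa using this
  have hnonneg : ∀ x, 0 ≤ ω x := by
    intro x
    have h := hadd x (-x)
    rw [add_neg_cancel, hzero, hneg] at h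
    linarith
  have hpos : ∀ x, x ≠ 0 → 0 < ω x := by
    intro x hx
    rcases lt_or_eq_of_le (hnonneg x) with h | h
    · exact h
    · exact absurd ((hdef x).mp h.symm) hx
  -- upper bound : ω x ≤ K ‖x‖
  obtain ⟨K, hK0, hKle⟩ : ∃ K, 0 ≤ K ∧ ∀ x, ω x ≤ K * ‖x‖ := by
    set b := Module.finBasis ℝ E with hb
    set T : E →L[ℝ] (Fin (Module.finrank ℝ E) → ℝ) :=
      LinearMap.toContinuousLinearMap b.equivFun.toLinearMap with hT
    have hsum0 : 0 ≤ ∑ i, ω (b i) := Finset.sum_nonneg fun i _ => hnonneg _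
    refine ⟨(∑ i, ω (b i)) * ‖T‖, by positivity, fun x => ?_⟩
    have hx : x = ∑ i, b.equivFun x i • b i := (b.sum_equivFun x).symm
    calc ω x = ω (∑ i, b.equivFun x i • b i) := by rw [← hx]
    _ ≤ ∑ i, ω (b.equivFun x i • b i) :=
        Finset.le_sum_of_subadditive ω hzero.le hadd _ _
    _ = ∑ i, |b.equivFun x i| * ω (b i) := by simp [hsmul]
    _ ≤ ∑ i, (‖T‖ * ‖x‖) * ω (b i) := by
        refine Finset.sum_le_sum fun i _ => ?_
        refine mul_le_mul_of_nonneg_right ?_ (hnonneg _)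
        calc |b.equivFun x i| = ‖T x i‖ := rfl
        _ ≤ ‖T x‖ := norm_le_pi_norm _ i
        _ ≤ ‖T‖ * ‖x‖ := T.le_opNorm x
    _ = (∑ i, ω (b i)) * ‖T‖ * ‖x‖ := by
        rw [Finset.sum_mul, Finset.sum_mul]
        exact Finset.sum_congr rfl fun i _ => by ring
  -- ω is continuous
  have hcont : Continuous ω := by
    have : LipschitzWith (Real.toNNReal K) ω := by
      refine LipschitzWith.of_dist_le_mul fun x y => ?_
      have h1 : ω x - ω y ≤ ω (x - y) := by
        have := hadd (x - y) y; simp at this; linarith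
      have h2 : ω y - ω x ≤ ω (x - y) := by
        have := hadd (y - x) x; simp at this
        have hn := hneg (x - y); simp [neg_sub] at hn; linarith
      have h3 : ω (x - y) ≤ K * ‖x - y‖ := hKle _
      rw [Real.dist_eq, dist_eq_norm]
      rw [abs_sub_le_iff]
      constructor <;> [skip; skip] <;>
        calc _ ≤ ω (x - y) := by linarith
        _ ≤ K * ‖x - y‖ := h3
        _ ≤ Real.toNNReal K * ‖x - y‖ := by
            gcongr; exact Real.le_coe_toNNReal K
    exact this.continuous
  rcases subsingleton_or_nontrivial E with hsub | hnt
  · exact ⟨1, one_pos, fun x => by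
      rw [Subsingleton.elim x 0]; simp [hzero]⟩
  · obtain ⟨v, hv⟩ := exists_ne (0 : E)
    have hsp : (Metric.sphere (0:E) 1).Nonempty := by
      refine ⟨‖v‖⁻¹ • v, ?_⟩
      rw [mem_sphere_zero_iff_norm, norm_smul, norm_inv, norm_norm]
      exact inv_mul_cancel₀ (norm_ne_zero_iff.mpr hv)
    obtain ⟨z, hz, hzmin⟩ :=
      (isCompact_sphere (0:E) 1).exists_isMinOn hsp hcont.continuousOn
    rw [mem_sphere_zero_iff_norm] at hz
    have hzne : z ≠ 0 := by intro h; rw [h] at hz; simp at hz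
    refine ⟨ω z, hpos z hzne, fun x => ?_⟩
    rcases eq_or_ne x 0 with rfl | hx
    · simp [hzero]
    · have hxn : ‖x‖ ≠ 0 := norm_ne_zero_iff.mpr hx
      have hu : (‖x‖⁻¹ • x) ∈ Metric.sphere (0:E) 1 := by
        rw [mem_sphere_zero_iff_norm, norm_smul, norm_inv, norm_norm]
        exact inv_mul_cancel₀ hxn
      have hle : ω z ≤ ω (‖x‖⁻¹ • x) := hzmin hu
      have heq : ω (‖x‖⁻¹ • x) = ‖x‖⁻¹ * ω x := by
        rw [hsmul]; congr 1; rw [abs_inv, abs_norm]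
      rw [heq] at hle
      have hxpos : (0:ℝ) < ‖x‖ := lt_of_le_of_ne (norm_nonneg x) (Ne.symm hxn)
      calc ω z * ‖x‖ ≤ (‖x‖⁻¹ * ω x) * ‖x‖ := by nlinarith
      _ = ω x := by field_simp
end aux

/-- (Corollary 1 instantiated for norms: `y = prox_{sω*}(y) + s·prox_{ω/s}(y/s)`)
Let `ω` be a norm on the finite-dimensional real inner product space `E` with dual norm
`ω*(z) = sup {⟪z, x⟫ : ω(x) ≤ 1}`, let `s > 0` and `y ∈ E`. If `q` is the (unique) point of
the unit dual-norm ball `B* = {z : ω*(z) ≤ 1}` minimizing `‖y − ·‖` over `B*`, and `m` is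
the (unique) global minimizer of `x ↦ (1/2)·‖x − y/s‖² + (1/s)·ω(x)`, then
`y = q + s • m`. -/
theorem moreau_decomposition_norm {E : Type*} [NormedAddCommGroup E]
    [InnerProductSpace ℝ E] [FiniteDimensional ℝ E]
    (ω : E → ℝ)
    (hω_add : ∀ x y, ω (x + y) ≤ ω x + ω y)
    (hω_smul : ∀ (c : ℝ) (x), ω (c • x) = |c| * ω x)
    (hω_def : ∀ x, ω x = 0 ↔ x = 0)
    (ωd : E → ℝ)
    (hωd : ∀ z, ωd z = sSup ((fun x => ⟪z, x⟫) '' {x : E | ω x ≤ 1}))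
    (s : ℝ) (hs : 0 < s) (y : E) (q m : E)
    (hq_mem : ωd q ≤ 1)
    (hq_min : ∀ z : E, ωd z ≤ 1 → ‖y - q‖ ≤ ‖y - z‖)
    (hm_min : ∀ x : E,
      (1 / 2) * ‖m - s⁻¹ • y‖ ^ 2 + s⁻¹ * ω m ≤ (1 / 2) * ‖x - s⁻¹ • y‖ ^ 2 + s⁻¹ * ω x) :
    y = q + s • m := by
  have hzero : ω 0 = 0 := (hω_def 0).mpr rfl
  have hnonneg : ∀ x, 0 ≤ ω x := by
    intro x
    have h := hω_add x (-x)
    have hn : ω (-x) = ω x := by simpa using hω_smul (-1) x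
    rw [add_neg_cancel, hzero, hn] at h
    linarith
  obtain ⟨c, hc, hlow⟩ := aux_norm_lower ω hω_add hω_smul hω_def
  have hsinv : (0:ℝ) < s⁻¹ := inv_pos.mpr hs
  set p := y - s • m with hp
  -- variational inequality
  have hVI : ∀ x : E, ⟪p, x - m⟫ ≤ ω x - ω m := by
    intro x
    have key : ∀ t : ℝ, 0 < t → t ≤ 1 →
        0 ≤ (⟪m - s⁻¹ • y, x - m⟫ + s⁻¹ * (ω x - ω m)) + (t/2) * ‖x - m‖^2 := by
      intro t ht0 ht1
      have h := hm_min (m + t • (x - m))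
      have hnorm : ‖(m + t • (x - m)) - s⁻¹ • y‖^2
          = ‖m - s⁻¹ • y‖^2 + 2*t*⟪m - s⁻¹ • y, x - m⟫ + t^2*‖x - m‖^2 := by
        have he : (m + t • (x - m)) - s⁻¹ • y = (m - s⁻¹ • y) + t • (x - m) := by
          abel
        rw [he, norm_add_sq_real, real_inner_smul_right, norm_smul,
          Real.norm_eq_abs, mul_pow, sq_abs]
        ring
      have hω' : ω (m + t • (x - m)) ≤ (1 - t) * ω m + t * ω x := by
        have he : m + t • (x - m) = (1 - t) • m + t • x := by
          rw [sub_smul, smul_sub, one_smul]; abel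
        rw [he]
        calc ω ((1 - t) • m + t • x) ≤ ω ((1 - t) • m) + ω (t • x) := hω_add _ _
        _ = (1 - t) * ω m + t * ω x := by
            rw [hω_smul, hω_smul, abs_of_nonneg (by linarith), abs_of_nonneg ht0.le]
      have h2 : 0 ≤ t * ((⟪m - s⁻¹ • y, x - m⟫ + s⁻¹ * (ω x - ω m)) + (t/2) * ‖x - m‖^2) := by
        nlinarith [mul_le_mul_of_nonneg_left hω' hsinv.le]
      exact nonneg_of_mul_nonneg_right h2 ht0
    have hA : 0 ≤ ⟪m - s⁻¹ • y, x - m⟫ + s⁻¹ * (ω x - ω m) := by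
      by_contra hA
      push_neg at hA
      set A := ⟪m - s⁻¹ • y, x - m⟫ + s⁻¹ * (ω x - ω m) with hAdef
      set N := ‖x - m‖^2 with hN
      have hN0 : 0 ≤ N := sq_nonneg _
      set t := min 1 (-A/(N+1)) with ht
      have ht0 : 0 < t := lt_min one_pos (div_pos (neg_pos.mpr hA) (by linarith))
      have ht1 : t ≤ 1 := min_le_left _ _
      have ht2 : t ≤ -A/(N+1) := min_le_right _ _
      have ht3 : t * (N+1) ≤ -A := (le_div_iff₀ (by linarith)).mp ht2
      have hk := key t ht0 ht1
      have ht4 : t * N + t ≤ -A := by nlinarith [ht3]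
      have ht5 : 0 ≤ t * N := mul_nonneg ht0.le hN0
      clear_value A N t
      nlinarith [hk, ht4, ht5, ht0, hA]
    have hps : m - s⁻¹ • y = -(s⁻¹ • p) := by
      rw [hp, smul_sub, smul_smul, inv_mul_cancel₀ hs.ne', one_smul]
      abel
    rw [hps, inner_neg_left, real_inner_smul_left] at hA
    nlinarith
  have hpm : ⟪p, m⟫ = ω m := by
    have h1 := hVI 0
    have h2 := hVI ((2:ℝ) • m)
    rw [zero_sub, inner_neg_right, hzero] at h1
    have he : (2:ℝ) • m - m = m := by
      rw [two_smul]; abel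
    rw [he, hω_smul] at h2
    norm_num at h2
    linarith
  have hpx : ∀ x, ⟪p, x⟫ ≤ ω x := by
    intro x
    have := hVI x
    rw [inner_sub_right] at this
    linarith [hpm]
  have hSp : ωd p ≤ 1 := by
    rw [hωd]
    refine Real.sSup_le ?_ zero_le_one
    rintro a ⟨x, hx, rfl⟩
    exact (hpx x).trans hx
  have hzm : ∀ z, ωd z ≤ 1 → ⟪z, m⟫ ≤ ω m := by
    intro z hz
    rcases eq_or_ne m 0 with rfl | hm
    · simp [hzero]
    · have hωm : 0 < ω m := by
        rcases lt_or_eq_of_le (hnonneg m) with h | h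
        · exact h
        · exact absurd ((hω_def m).mp h.symm) hm
      have hbdd : BddAbove ((fun x => ⟪z, x⟫) '' {x : E | ω x ≤ 1}) := by
        refine ⟨‖z‖ * c⁻¹, ?_⟩
        rintro a ⟨x, hx, rfl⟩
        calc ⟪z, x⟫ ≤ ‖z‖ * ‖x‖ := real_inner_le_norm z x
        _ ≤ ‖z‖ * c⁻¹ := by
            refine mul_le_mul_of_nonneg_left ?_ (norm_nonneg z)
            have hx' : ω x ≤ 1 := hx
            nlinarith [hlow x, mul_inv_cancel₀ hc.ne', hc]
      have hx0 : ω ((ω m)⁻¹ • m) ≤ 1 := by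
        rw [hω_smul, abs_of_nonneg (inv_nonneg.mpr hωm.le), inv_mul_cancel₀ hωm.ne']
      have hle : ⟪z, (ω m)⁻¹ • m⟫ ≤ ωd z := by
        rw [hωd]
        exact le_csSup hbdd ⟨_, hx0, rfl⟩
      rw [real_inner_smul_right] at hle
      calc ⟪z, m⟫ = ω m * ((ω m)⁻¹ * ⟪z, m⟫) := by field_simp
      _ ≤ ω m * 1 := mul_le_mul_of_nonneg_left (hle.trans hz) hωm.le
      _ = ω m := mul_one _
  have hkey : ∀ z, ωd z ≤ 1 → ‖y - p‖^2 + ‖z - p‖^2 ≤ ‖y - z‖^2 := by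
    intro z hz
    have hyz : y - z = (y - p) - (z - p) := by abel
    have hinner : ⟪y - p, z - p⟫ ≤ 0 := by
      have hyp : y - p = s • m := by rw [hp]; abel
      rw [hyp, real_inner_smul_left]
      have h1 : ⟪m, z - p⟫ = ⟪z, m⟫ - ω m := by
        rw [inner_sub_right, real_inner_comm z m, real_inner_comm p m, hpm]
      rw [h1]
      nlinarith [hzm z hz]
    rw [hyz, norm_sub_sq_real (y - p) (z - p)]
    linarith
  have h1 := hkey q hq_mem
  have h2 : ‖y - q‖^2 ≤ ‖y - p‖^2 := by
    have := hq_min p hSp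
    exact pow_le_pow_left₀ (norm_nonneg _) this 2
  have h3 : ‖q - p‖^2 ≤ 0 := by linarith
  have h4 : q = p := by
    have h5 : ‖q - p‖ = 0 := by nlinarith [sq_nonneg ‖q - p‖, norm_nonneg (q - p)]
    rw [norm_eq_zero, sub_eq_zero] at h5
    exact h5
  rw [h4, hp]
  abel
end

section
/- (Projection onto the ℓ1 ball) Let y ∈ ℝⁿ and s > 0 with ‖y‖₁ > s. Then there exists a unique θ > 0 such that Σ_{i=1}^n max(|y_i| − θ, 0) = s, and the vector x* defined componentwise by x*_i = sign(y_i)·max(|y_i| − θ, 0) is the unique point of the ℓ1 ball {z ∈ ℝⁿ : ‖z‖₁ ≤ s} minimizing the Euclidean distance to y. -/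
open RealInnerProductSpace

private lemma l1_sum_strict (n : ℕ) (y : Fin n → ℝ) {a b s : ℝ} (hab : a < b)
    (ha : ∑ i, max (|y i| - a) 0 = s) (hs : 0 < s) :
    ∑ i, max (|y i| - b) 0 < s := by
  have hex : ∃ i, a < |y i| := by
    by_contra h
    push_neg at h
    have : ∑ i, max (|y i| - a) 0 = 0 :=
      Finset.sum_eq_zero fun i _ => max_eq_right (by linarith [h i])
    rw [ha] at this; linarith
  obtain ⟨i, hi⟩ := hex
  rw [← ha]
  apply Finset.sum_lt_sum (fun j _ => max_le_max (by linarith) le_rfl)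
  exact ⟨i, Finset.mem_univ i, by
    rw [max_eq_left (by linarith : (0:ℝ) ≤ |y i| - a)]
    exact max_lt (by linarith) (by linarith)⟩

/-- (Projection onto the ℓ1 ball) Let `y ∈ ℝⁿ` and `s > 0` with `‖y‖₁ > s`. Then there is a
unique `θ > 0` with `∑ᵢ max(|y_i| − θ, 0) = s`, and the vector
`x*_i = sign(y_i)·max(|y_i| − θ, 0)` is the unique point of the ℓ1 ball
`{z : ‖z‖₁ ≤ s}` minimizing the Euclidean distance to `y`. -/
theorem projection_onto_l1_ball (n : ℕ) (y : EuclideanSpace ℝ (Fin n))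
    (s : ℝ) (hs : 0 < s) (hy : s < ∑ i, |y i|) :
    (∃! θ : ℝ, 0 < θ ∧ ∑ i, max (|y i| - θ) 0 = s) ∧
    (∀ θ : ℝ, 0 < θ → (∑ i, max (|y i| - θ) 0 = s) →
      ∀ xstar : EuclideanSpace ℝ (Fin n),
        (∀ i, xstar i = Real.sign (y i) * max (|y i| - θ) 0) →
        (∑ i, |xstar i|) ≤ s ∧
        (∀ z : EuclideanSpace ℝ (Fin n), (∑ i, |z i|) ≤ s → ‖y - xstar‖ ≤ ‖y - z‖) ∧
        (∀ z : EuclideanSpace ℝ (Fin n), (∑ i, |z i|) ≤ s →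
          (∀ w : EuclideanSpace ℝ (Fin n), (∑ i, |w i|) ≤ s → ‖y - z‖ ≤ ‖y - w‖) →
          z = xstar)) := by
  constructor
  · -- existence and uniqueness of θ
    set f : ℝ → ℝ := fun θ => ∑ i, max (|y i| - θ) 0 with hf
    set M : ℝ := ∑ i, |y i| with hM
    have hcont : Continuous f := by
      apply continuous_finset_sum
      intro i _
      exact (continuous_const.sub continuous_id).max continuous_const
    have hf0 : f 0 = M := by
      simp only [hf]
      exact Finset.sum_congr rfl fun i _ => by
        rw [sub_zero, max_eq_left (abs_nonneg _)]
    have hfM : f M = 0 := Finset.sum_eq_zero fun i _ => by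
      have : |y i| ≤ M := Finset.single_le_sum (fun j _ => abs_nonneg (y j)) (Finset.mem_univ i)
      exact max_eq_right (by linarith)
    have hsub := intermediate_value_Icc' (by linarith : (0:ℝ) ≤ M) hcont.continuousOn
    have hsmem : s ∈ Set.Icc (f M) (f 0) := by
      rw [hf0, hfM]; exact ⟨hs.le, hy.le⟩
    obtain ⟨θ, hθmem, hθeq⟩ := hsub hsmem
    have hθpos : 0 < θ := by
      rcases hθmem.1.eq_or_lt with h | h
      · exfalso; rw [← h] at hθeq; rw [hf0] at hθeq; linarith
      · exact h
    refine ⟨θ, ⟨hθpos, hθeq⟩, ?_⟩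
    rintro θ' ⟨hθ'pos, hθ'eq⟩
    rcases lt_trichotomy θ' θ with h | h | h
    · have hθeq' : ∑ i, max (|y i| - θ) 0 = s := hθeq
      exact absurd (l1_sum_strict n y h hθ'eq hs) (by rw [hθeq']; simp)
    · exact h
    · have hθeq' : ∑ i, max (|y i| - θ) 0 = s := hθeq
      exact absurd (l1_sum_strict n y h hθeq' hs) (by rw [hθ'eq]; simp)
  · -- projection properties
    intro θ hθ hsum xstar hx
    have h1 : ∀ i, |xstar i| = max (|y i| - θ) 0 := by
      intro i
      rw [hx i, abs_mul, abs_of_nonneg (le_max_right (|y i| - θ) 0)]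
      rcases lt_trichotomy (y i) 0 with h | h | h
      · rw [Real.sign_of_neg h]; norm_num
      · have hle : |y i| - θ ≤ 0 := by rw [h, abs_zero]; linarith
        rw [max_eq_right hle]; simp
      · rw [Real.sign_of_pos h]; norm_num
    have h2 : ∑ i, |xstar i| = s := by
      rw [Finset.sum_congr rfl fun i _ => h1 i, hsum]
    have hsignsq : ∀ i, θ < |y i| → Real.sign (y i) * Real.sign (y i) = 1 := by
      intro i hi
      rcases lt_trichotomy (y i) 0 with h | h | h
      · rw [Real.sign_of_neg h]; norm_num
      · exfalso; rw [h] at hi; simp at hi; linarith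
      · rw [Real.sign_of_pos h]; norm_num
    have hsignabs : ∀ i, θ < |y i| → Real.sign (y i) * |y i| = y i := by
      intro i hi
      rcases lt_trichotomy (y i) 0 with h | h | h
      · rw [Real.sign_of_neg h, abs_of_neg h]; ring
      · exfalso; rw [h] at hi; simp at hi; linarith
      · rw [Real.sign_of_pos h, abs_of_pos h, one_mul]
    have h3 : ∀ i, |y i - xstar i| ≤ θ := by
      intro i
      rcases le_or_gt (|y i|) θ with h | h
      · rw [hx i, max_eq_right (by linarith), mul_zero, sub_zero]; exact h
      · rw [hx i, max_eq_left (by linarith)]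
        rcases lt_trichotomy (y i) 0 with hc | hc | hc
        · rw [Real.sign_of_neg hc, abs_of_neg hc,
            show y i - -1 * (-y i - θ) = -θ by ring, abs_neg, abs_of_pos hθ]
        · exfalso; rw [hc, abs_zero] at h; linarith
        · rw [Real.sign_of_pos hc, abs_of_pos hc,
            show y i - 1 * (y i - θ) = θ by ring, abs_of_pos hθ]
    have h4 : ∀ i, (y i - xstar i) * xstar i = θ * |xstar i| := by
      intro i
      rcases le_or_gt (|y i|) θ with h | h
      · have hz : xstar i = 0 := by rw [hx i, max_eq_right (by linarith), mul_zero]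
        rw [hz]; simp
      · have hm : max (|y i| - θ) 0 = |y i| - θ := max_eq_left (by linarith)
        rw [h1 i, hm, hx i, hm]
        rcases lt_trichotomy (y i) 0 with hc | hc | hc
        · rw [Real.sign_of_neg hc, abs_of_neg hc]; ring
        · exfalso; rw [hc, abs_zero] at h; linarith
        · rw [Real.sign_of_pos hc, abs_of_pos hc]; ring
    -- inner product formula
    have hinner : ∀ u v : EuclideanSpace ℝ (Fin n), ⟪u, v⟫ = ∑ i, u i * v i := by
      intro u v
      simp [PiLp.inner_apply, RCLike.inner_apply, conj_trivial]
      exact Finset.sum_congr rfl fun i _ => mul_comm _ _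
    have hkey : ∀ z : EuclideanSpace ℝ (Fin n), (∑ i, |z i|) ≤ s →
        0 ≤ ⟪y - xstar, xstar - z⟫ := by
      intro z hz
      rw [hinner]
      have hc : ∀ i, (y - xstar) i * (xstar - z) i
          = θ * |xstar i| - (y i - xstar i) * z i := by
        intro i
        have : (y - xstar) i = y i - xstar i := rfl
        have h2' : (xstar - z) i = xstar i - z i := rfl
        rw [this, h2', ← h4 i]; ring
      rw [Finset.sum_congr rfl fun i _ => hc i, Finset.sum_sub_distrib,
        ← Finset.mul_sum, h2]
      have hb : ∑ i, (y i - xstar i) * z i ≤ θ * s := by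
        calc ∑ i, (y i - xstar i) * z i ≤ ∑ i, θ * |z i| := by
              apply Finset.sum_le_sum
              intro i _
              calc (y i - xstar i) * z i ≤ |(y i - xstar i) * z i| := le_abs_self _
                _ = |y i - xstar i| * |z i| := abs_mul _ _
                _ ≤ θ * |z i| := mul_le_mul_of_nonneg_right (h3 i) (abs_nonneg _)
          _ = θ * ∑ i, |z i| := (Finset.mul_sum _ _ _).symm
          _ ≤ θ * s := mul_le_mul_of_nonneg_left hz (le_of_lt hθ)
      linarith
    have hid : ∀ z : EuclideanSpace ℝ (Fin n),
        ‖y - z‖ ^ 2 = ‖y - xstar‖ ^ 2 + 2 * ⟪y - xstar, xstar - z⟫ + ‖xstar - z‖ ^ 2 := by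
      intro z
      have : y - z = (y - xstar) + (xstar - z) := by abel
      rw [this, norm_add_sq_real]
    refine ⟨le_of_eq h2, ?_, ?_⟩
    · intro z hz
      have h5 := hkey z hz
      have h6 := hid z
      nlinarith [norm_nonneg (y - z), norm_nonneg (y - xstar), sq_nonneg ‖xstar - z‖]
    · intro z hz hzmin
      have h5 := hkey z hz
      have h6 := hid z
      have h7 : ‖y - z‖ ≤ ‖y - xstar‖ := hzmin xstar (le_of_eq h2)
      have h8 : ‖xstar - z‖ = 0 := by
        nlinarith [norm_nonneg (y - z), norm_nonneg (y - xstar), norm_nonneg (xstar - z)]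
      have := sub_eq_zero.mp (norm_eq_zero.mp h8)
      exact this.symm
end

section
/- (Prox decomposition for the sparse ℓ1 + ℓ1/ℓ∞ penalty) Let H be a partition of {1, …, n} into nonempty groups, λ₁ > 0, λ∞ > 0 and y ∈ ℝⁿ. Let u ∈ ℝⁿ be defined componentwise by u_i = max(y_i − λ₁, 0) − max(−y_i − λ₁, 0), and let x* be the unique minimizer of x ↦ (1/2)·‖x − u‖₂² + λ∞·Σ_{g∈H} max_{i∈g} |x_i| on ℝⁿ. Then x* is also the unique minimizer of x ↦ (1/2)·‖x − y‖₂² + λ₁·‖x‖₁ + λ∞·Σ_{g∈H} max_{i∈g} |x_i| on ℝⁿ. -/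
/-- Clamping `a` to the interval `[min u 0, max u 0]`. -/
private lemma clamp_props (a u : ℝ) :
    min u 0 ≤ max (min a (max u 0)) (min u 0) ∧
    max (min a (max u 0)) (min u 0) ≤ max u 0 ∧
    |max (min a (max u 0)) (min u 0)| ≤ |a| ∧
    (a - max (min a (max u 0)) (min u 0)) ^ 2 +
      (max (min a (max u 0)) (min u 0) - u) ^ 2 ≤ (a - u) ^ 2 := by
  have h1 : min u 0 ≤ max u 0 := le_trans (min_le_right u 0) (le_max_right u 0)
  have h2 : min u 0 ≤ u := min_le_left u 0
  have h3 : u ≤ max u 0 := le_max_left u 0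
  rcases le_total a (min u 0) with h | h
  · have e1 : min a (max u 0) = a := min_eq_left (h.trans h1)
    have e2 : max a (min u 0) = min u 0 := max_eq_right h
    rw [e1, e2]
    refine ⟨le_refl _, h1, ?_, by nlinarith⟩
    rw [abs_of_nonpos (min_le_right u 0), abs_of_nonpos (h.trans (min_le_right u 0))]
    linarith
  · rcases le_total a (max u 0) with h' | h'
    · have e1 : min a (max u 0) = a := min_eq_left h'
      have e2 : max a (min u 0) = a := max_eq_left h
      rw [e1, e2]
      exact ⟨h, h', le_refl _, by nlinarith⟩
    · have e1 : min a (max u 0) = max u 0 := min_eq_right h'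
      have e2 : max (max u 0) (min u 0) = max u 0 := max_eq_left h1
      rw [e1, e2]
      refine ⟨h1, le_refl _, ?_, by nlinarith⟩
      rw [abs_of_nonneg (le_max_right u 0), abs_of_nonneg ((le_max_right u 0).trans h')]
      linarith

/-- Properties of soft thresholding. -/
private lemma soft_facts (yv uv lam1 : ℝ) (h1 : 0 < lam1)
    (huv : uv = max (yv - lam1) 0 - max (-yv - lam1) 0) :
    |yv - uv| ≤ lam1 ∧ (0 < uv → yv - uv = lam1) ∧ (uv < 0 → yv - uv = -lam1) := by
  rcases le_total yv (-lam1) with h | h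
  · have e1 : max (yv - lam1) 0 = 0 := max_eq_right (by linarith)
    have e2 : max (-yv - lam1) 0 = -yv - lam1 := max_eq_left (by linarith)
    have : uv = yv + lam1 := by rw [huv, e1, e2]; ring
    rw [this]
    refine ⟨by rw [abs_of_nonpos (by linarith)]; linarith, fun h' => by linarith, fun _ => by ring⟩
  · rcases le_total yv lam1 with h' | h'
    · have e1 : max (yv - lam1) 0 = 0 := max_eq_right (by linarith)
      have e2 : max (-yv - lam1) 0 = 0 := max_eq_right (by linarith)
      have : uv = 0 := by rw [huv, e1, e2]; ring
      rw [this]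
      exact ⟨by rw [abs_le]; constructor <;> linarith, fun h => by linarith, fun h => by linarith⟩
    · have e1 : max (yv - lam1) 0 = yv - lam1 := max_eq_left (by linarith)
      have e2 : max (-yv - lam1) 0 = 0 := max_eq_right (by linarith)
      have : uv = yv - lam1 := by rw [huv, e1, e2]; ring
      rw [this]
      exact ⟨by rw [abs_of_nonneg (by linarith)]; linarith, fun _ => by ring, fun h => by linarith⟩

/-- (Prox decomposition for the sparse ℓ1 + ℓ1/ℓ∞ penalty) Let `H` be a partition of
`{1, …, n}` into nonempty groups, `λ₁ > 0`, `λ∞ > 0`, `y ∈ ℝⁿ`, and let `Ω` be the ℓ1/ℓ∞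
group norm `Ω(x) = ∑_{g∈H} max_{i∈g} |x_i|`. If `u` is the soft thresholding of `y` with
threshold `λ₁`, i.e. `u_i = max(y_i − λ₁, 0) − max(−y_i − λ₁, 0)`, and `x*` is the (unique)
minimizer of `x ↦ (1/2)·‖x − u‖₂² + λ∞·Ω(x)`, then `x*` is also the unique minimizer of
`x ↦ (1/2)·‖x − y‖₂² + λ₁·‖x‖₁ + λ∞·Ω(x)`. -/
theorem prox_decomposition_l1_group (n : ℕ) (H : Finset (Finset (Fin n)))
    (h_nonempty : ∀ g ∈ H, g.Nonempty)
    (h_disjoint : ∀ g ∈ H, ∀ g' ∈ H, g ≠ g' → Disjoint g g')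
    (h_cover : ∀ i : Fin n, ∃ g ∈ H, i ∈ g)
    (lam1 laminf : ℝ) (h1 : 0 < lam1) (hinf : 0 < laminf)
    (Ω : (Fin n → ℝ) → ℝ)
    (hΩ : ∀ x, Ω x = ∑ g ∈ H, sSup ((fun i => |x i|) '' (g : Set (Fin n))))
    (y u xstar : Fin n → ℝ)
    (hu : ∀ i, u i = max (y i - lam1) 0 - max (-y i - lam1) 0)
    (hxstar : ∀ x : Fin n → ℝ,
      (1 / 2) * (∑ i, (xstar i - u i) ^ 2) + laminf * Ω xstar ≤
        (1 / 2) * (∑ i, (x i - u i) ^ 2) + laminf * Ω x) :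
    (∀ x : Fin n → ℝ,
      (1 / 2) * (∑ i, (xstar i - y i) ^ 2) + lam1 * (∑ i, |xstar i|) + laminf * Ω xstar ≤
        (1 / 2) * (∑ i, (x i - y i) ^ 2) + lam1 * (∑ i, |x i|) + laminf * Ω x) ∧
    (∀ x : Fin n → ℝ,
      (∀ x' : Fin n → ℝ,
        (1 / 2) * (∑ i, (x i - y i) ^ 2) + lam1 * (∑ i, |x i|) + laminf * Ω x ≤
          (1 / 2) * (∑ i, (x' i - y i) ^ 2) + lam1 * (∑ i, |x' i|) + laminf * Ω x') →
      x = xstar) := by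
  classical
  -- soft thresholding facts
  have hsf : ∀ i, |y i - u i| ≤ lam1 ∧ (0 < u i → y i - u i = lam1) ∧
      (u i < 0 → y i - u i = -lam1) := fun i => soft_facts (y i) (u i) lam1 h1 (hu i)
  -- monotonicity of Ω
  have hΩmono : ∀ a b : Fin n → ℝ, (∀ i, |a i| ≤ |b i|) → Ω a ≤ Ω b := by
    intro a b hab
    rw [hΩ, hΩ]
    refine Finset.sum_le_sum fun g hg => ?_
    have hne := h_nonempty g hg
    rw [← Finset.sup'_eq_csSup_image g hne, ← Finset.sup'_eq_csSup_image g hne]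
    exact Finset.sup'_le _ _ fun i hi => (hab i).trans (Finset.le_sup' (fun j => |b j|) hi)
  -- Step A: xstar lies coordinatewise between 0 and u
  set z : Fin n → ℝ := fun i => max (min (xstar i) (max (u i) 0)) (min (u i) 0) with hzdef
  have hzp : ∀ i, min (u i) 0 ≤ z i ∧ z i ≤ max (u i) 0 ∧ |z i| ≤ |xstar i| ∧
      (xstar i - z i) ^ 2 + (z i - u i) ^ 2 ≤ (xstar i - u i) ^ 2 :=
    fun i => clamp_props (xstar i) (u i)
  have hΩz : Ω z ≤ Ω xstar := hΩmono z xstar fun i => (hzp i).2.2.1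
  have hΩz' : laminf * Ω z ≤ laminf * Ω xstar := mul_le_mul_of_nonneg_left hΩz hinf.le
  have hsum : (∑ i, (xstar i - z i) ^ 2) + (∑ i, (z i - u i) ^ 2) ≤
      ∑ i, (xstar i - u i) ^ 2 := by
    rw [← Finset.sum_add_distrib]
    exact Finset.sum_le_sum fun i _ => (hzp i).2.2.2
  have hGz := hxstar z
  have hzero : ∑ i, (xstar i - z i) ^ 2 ≤ 0 := by linarith
  have hxz : ∀ i, xstar i = z i := by
    intro i
    have h0 : ∀ j ∈ Finset.univ, (0:ℝ) ≤ (xstar j - z j) ^ 2 := fun j _ => sq_nonneg _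
    have heq := (Finset.sum_eq_zero_iff_of_nonneg h0).1
      (le_antisymm hzero (Finset.sum_nonneg h0)) i (Finset.mem_univ i)
    have := sq_eq_zero_iff.1 heq
    linarith
  have hlo : ∀ i, min (u i) 0 ≤ xstar i := fun i => (hxz i) ▸ (hzp i).1
  have hhi : ∀ i, xstar i ≤ max (u i) 0 := fun i => (hxz i) ▸ (hzp i).2.1
  -- Step B: key per-coordinate identity and inequality
  have hkey : ∀ i, lam1 * |xstar i| - xstar i * (y i - u i) = 0 := by
    intro i
    obtain ⟨hb, hpos, hneg⟩ := hsf i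
    rcases lt_trichotomy (u i) 0 with h | h | h
    · have h2 : xstar i ≤ 0 := le_trans (hhi i) (le_of_eq (max_eq_right h.le))
      rw [hneg h, abs_of_nonpos h2]; ring
    · have hlo' := hlo i; have hhi' := hhi i
      rw [h] at hlo' hhi'
      simp only [min_self, max_self] at hlo' hhi'
      have h2 : xstar i = 0 := le_antisymm hhi' hlo'
      rw [h2]; simp
    · have h2 : 0 ≤ xstar i := le_trans (le_of_eq (min_eq_right h.le).symm) (hlo i)
      rw [hpos h, abs_of_nonneg h2]; ring
  have hterm_nonneg : ∀ (t : ℝ) (i : Fin n), 0 ≤ lam1 * |t| - t * (y i - u i) := by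
    intro t i
    have hb := (hsf i).1
    have ha : t * (y i - u i) ≤ |t| * |y i - u i| := by
      calc t * (y i - u i) ≤ |t * (y i - u i)| := le_abs_self _
        _ = |t| * |y i - u i| := abs_mul _ _
    have h2 : |t| * |y i - u i| ≤ |t| * lam1 := mul_le_mul_of_nonneg_left hb (abs_nonneg t)
    nlinarith
  -- decomposition of the objective
  have hdecomp : ∀ x : Fin n → ℝ,
      (1 / 2) * (∑ i, (x i - y i) ^ 2) + lam1 * (∑ i, |x i|) =
      (1 / 2) * (∑ i, (x i - u i) ^ 2) + (∑ i, (lam1 * |x i| - x i * (y i - u i))) +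
        (∑ i, ((y i) ^ 2 - (u i) ^ 2) / 2) := by
    intro x
    have e : ∑ i : Fin n, ((1 / 2) * (x i - y i) ^ 2 + lam1 * |x i|) =
        ∑ i : Fin n, ((1 / 2) * (x i - u i) ^ 2 + (lam1 * |x i| - x i * (y i - u i)) +
          ((y i) ^ 2 - (u i) ^ 2) / 2) :=
      Finset.sum_congr rfl fun i _ => by ring
    rw [Finset.sum_add_distrib, Finset.sum_add_distrib, Finset.sum_add_distrib,
      ← Finset.mul_sum, ← Finset.mul_sum, ← Finset.mul_sum] at e
    linarith
  -- Part 1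
  have part1 : ∀ x : Fin n → ℝ,
      (1 / 2) * (∑ i, (xstar i - y i) ^ 2) + lam1 * (∑ i, |xstar i|) + laminf * Ω xstar ≤
        (1 / 2) * (∑ i, (x i - y i) ^ 2) + lam1 * (∑ i, |x i|) + laminf * Ω x := by
    intro x
    have hA := hdecomp x
    have hB := hdecomp xstar
    have hzS : ∑ i, (lam1 * |xstar i| - xstar i * (y i - u i)) = 0 :=
      Finset.sum_eq_zero fun i _ => hkey i
    have hnn : 0 ≤ ∑ i, (lam1 * |x i| - x i * (y i - u i)) :=
      Finset.sum_nonneg fun i _ => hterm_nonneg (x i) i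
    have hG := hxstar x
    linarith
  refine ⟨part1, ?_⟩
  -- Part 2: uniqueness
  intro x hx
  have hx1 := hx xstar
  have hx2 := part1 x
  set m : Fin n → ℝ := fun i => (x i + xstar i) / 2 with hmdef
  have hq : ∑ i, (m i - y i) ^ 2 =
      (1 / 2) * (∑ i, (x i - y i) ^ 2) + (1 / 2) * (∑ i, (xstar i - y i) ^ 2) -
        (1 / 4) * (∑ i, (x i - xstar i) ^ 2) := by
    have e : ∑ i : Fin n, (m i - y i) ^ 2 =
        ∑ i : Fin n, ((1 / 2) * (x i - y i) ^ 2 + (1 / 2) * (xstar i - y i) ^ 2 -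
          (1 / 4) * (x i - xstar i) ^ 2) :=
      Finset.sum_congr rfl fun i _ => by
        have : m i = (x i + xstar i) / 2 := rfl
        rw [this]; ring
    rw [e, Finset.sum_sub_distrib, Finset.sum_add_distrib,
      ← Finset.mul_sum, ← Finset.mul_sum, ← Finset.mul_sum]
  have habs : ∀ i, |m i| ≤ (|x i| + |xstar i|) / 2 := by
    intro i
    have hm : m i = (x i + xstar i) / 2 := rfl
    rw [hm, abs_div, abs_two]
    have := abs_add_le (x i) (xstar i)
    linarith
  have hsa : ∑ i, |m i| ≤ ((∑ i, |x i|) + (∑ i, |xstar i|)) / 2 := by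
    have e : ((∑ i, |x i|) + (∑ i, |xstar i|)) / 2 = ∑ i : Fin n, (|x i| + |xstar i|) / 2 := by
      rw [← Finset.sum_add_distrib, Finset.sum_div]
    rw [e]
    exact Finset.sum_le_sum fun i _ => habs i
  have hΩm : Ω m ≤ (Ω x + Ω xstar) / 2 := by
    rw [hΩ, hΩ, hΩ]
    have e : ((∑ g ∈ H, sSup ((fun i => |x i|) '' (g : Set (Fin n)))) +
        ∑ g ∈ H, sSup ((fun i => |xstar i|) '' (g : Set (Fin n)))) / 2 =
        ∑ g ∈ H, (sSup ((fun i => |x i|) '' (g : Set (Fin n))) +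
          sSup ((fun i => |xstar i|) '' (g : Set (Fin n)))) / 2 := by
      rw [← Finset.sum_add_distrib, Finset.sum_div]
    rw [e]
    refine Finset.sum_le_sum fun g hg => ?_
    have hne := h_nonempty g hg
    rw [← Finset.sup'_eq_csSup_image g hne, ← Finset.sup'_eq_csSup_image g hne,
      ← Finset.sup'_eq_csSup_image g hne]
    refine Finset.sup'_le _ _ fun i hi => ?_
    have hx' : |x i| ≤ g.sup' hne (fun j => |x j|) := Finset.le_sup' (fun j => |x j|) hi
    have hxs : |xstar i| ≤ g.sup' hne (fun j => |xstar j|) := Finset.le_sup' (fun j => |xstar j|) hi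
    have h3 := habs i
    linarith
  have hFm := part1 m
  have hsa' : lam1 * (∑ i, |m i|) ≤ lam1 * (((∑ i, |x i|) + (∑ i, |xstar i|)) / 2) :=
    mul_le_mul_of_nonneg_left hsa h1.le
  have hΩm' : laminf * Ω m ≤ laminf * ((Ω x + Ω xstar) / 2) :=
    mul_le_mul_of_nonneg_left hΩm hinf.le
  have hsq : (0:ℝ) ≤ ∑ i, (x i - xstar i) ^ 2 := Finset.sum_nonneg fun i _ => sq_nonneg _
  have hzero2 : ∑ i, (x i - xstar i) ^ 2 ≤ 0 := by linarith
  funext i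
  have h0 : ∀ j ∈ Finset.univ, (0:ℝ) ≤ (x j - xstar j) ^ 2 := fun j _ => sq_nonneg _
  have heq := (Finset.sum_eq_zero_iff_of_nonneg h0).1
    (le_antisymm hzero2 hsq) i (Finset.mem_univ i)
  have := sq_eq_zero_iff.1 heq
  linarith
end

section
/- (Prox composition with an additional ℓ2 term) Let H be a partition of {1, …, n} into nonempty groups, λ₁ > 0, λ∞ > 0, λ₂ > 0 and y ∈ ℝⁿ. Let u be the unique minimizer of x ↦ (1/2)·‖x − y‖₂² + λ₁·‖x‖₁ + λ∞·Σ_{g∈H} max_{i∈g} |x_i| on ℝⁿ, and define x* = 0 if ‖u‖₂ ≤ λ₂ and x* = (1 − λ₂/‖u‖₂)·u otherwise. Then x* is the unique minimizer of x ↦ (1/2)·‖x − y‖₂² + λ₁·‖x‖₁ + λ∞·Σ_{g∈H} max_{i∈g} |x_i| + λ₂·‖x‖₂ on ℝⁿ. -/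
/-- Cauchy–Schwarz for finite sums. -/
lemma prox_aux_cs {n : ℕ} (f g : Fin n → ℝ) : (∑ i, f i * g i) ≤
    Real.sqrt (∑ i, f i ^ 2) * Real.sqrt (∑ i, g i ^ 2) := by
  have h := Finset.sum_mul_sq_le_sq_mul_sq Finset.univ f g
  calc ∑ i, f i * g i ≤ |∑ i, f i * g i| := le_abs_self _
    _ = Real.sqrt ((∑ i, f i * g i)^2) := (Real.sqrt_sq_eq_abs _).symm
    _ ≤ Real.sqrt ((∑ i, f i ^2) * ∑ i, g i ^2) := Real.sqrt_le_sqrt h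
    _ = _ := Real.sqrt_mul (Finset.sum_nonneg fun i _ => sq_nonneg _) _

/-- sup' of a nonneg-scaled family. -/
lemma prox_aux_sup'_smul {n : ℕ} (g : Finset (Fin n)) (hg : g.Nonempty) (c : ℝ) (hc : 0 ≤ c)
    (f : Fin n → ℝ) : g.sup' hg (fun i => c * f i) = c * g.sup' hg f := by
  rw [eq_comm]
  exact Finset.comp_sup'_eq_sup'_comp hg (fun x => c * x)
    (fun x y => mul_max_of_nonneg x y hc)

set_option maxHeartbeats 1000000

/-- (Prox composition with an additional ℓ2 term) Let `H` be a partition of `{1, …, n}`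
into nonempty groups, `λ₁, λ∞, λ₂ > 0`, `y ∈ ℝⁿ`, and let `Ω` be the ℓ1/ℓ∞ group norm. If
`u` is the (unique) minimizer of `x ↦ (1/2)·‖x − y‖₂² + λ₁·‖x‖₁ + λ∞·Ω(x)` and
`x* = 0` if `‖u‖₂ ≤ λ₂`, `x* = (1 − λ₂/‖u‖₂)·u` otherwise (block soft thresholding of `u`),
then `x*` is the unique minimizer of `x ↦ (1/2)·‖x − y‖₂² + λ₁·‖x‖₁ + λ∞·Ω(x) + λ₂·‖x‖₂`. -/
theorem prox_composition_with_l2 (n : ℕ) (H : Finset (Finset (Fin n)))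
    (h_nonempty : ∀ g ∈ H, g.Nonempty)
    (h_disjoint : ∀ g ∈ H, ∀ g' ∈ H, g ≠ g' → Disjoint g g')
    (h_cover : ∀ i : Fin n, ∃ g ∈ H, i ∈ g)
    (lam1 laminf lam2 : ℝ) (h1 : 0 < lam1) (hinf : 0 < laminf) (h2 : 0 < lam2)
    (Ω : (Fin n → ℝ) → ℝ)
    (hΩ : ∀ x, Ω x = ∑ g ∈ H, sSup ((fun i => |x i|) '' (g : Set (Fin n))))
    (y u xstar : Fin n → ℝ)
    (hu : ∀ x : Fin n → ℝ,
      (1 / 2) * (∑ i, (u i - y i) ^ 2) + lam1 * (∑ i, |u i|) + laminf * Ω u ≤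
        (1 / 2) * (∑ i, (x i - y i) ^ 2) + lam1 * (∑ i, |x i|) + laminf * Ω x)
    (hxstar : xstar =
      if Real.sqrt (∑ i, (u i) ^ 2) ≤ lam2 then 0
      else (1 - lam2 / Real.sqrt (∑ i, (u i) ^ 2)) • u) :
    (∀ x : Fin n → ℝ,
      (1 / 2) * (∑ i, (xstar i - y i) ^ 2) + lam1 * (∑ i, |xstar i|) + laminf * Ω xstar +
          lam2 * Real.sqrt (∑ i, (xstar i) ^ 2) ≤
        (1 / 2) * (∑ i, (x i - y i) ^ 2) + lam1 * (∑ i, |x i|) + laminf * Ω x +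
          lam2 * Real.sqrt (∑ i, (x i) ^ 2)) ∧
    (∀ x : Fin n → ℝ,
      (∀ x' : Fin n → ℝ,
        (1 / 2) * (∑ i, (x i - y i) ^ 2) + lam1 * (∑ i, |x i|) + laminf * Ω x +
            lam2 * Real.sqrt (∑ i, (x i) ^ 2) ≤
          (1 / 2) * (∑ i, (x' i - y i) ^ 2) + lam1 * (∑ i, |x' i|) + laminf * Ω x' +
            lam2 * Real.sqrt (∑ i, (x' i) ^ 2)) →
      x = xstar) := by
  classical
  -- Basic facts about Ω
  have hΩsup : ∀ (x : Fin n → ℝ) (g : Finset (Fin n)) (hg : g ∈ H),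
      sSup ((fun i => |x i|) '' (g : Set (Fin n))) = g.sup' (h_nonempty g hg) (fun i => |x i|) :=
    fun x g hg => (Finset.sup'_eq_csSup_image g (h_nonempty g hg) _).symm
  have hΩ0 : Ω 0 = 0 := by
    rw [hΩ]
    refine Finset.sum_eq_zero fun g hg => ?_
    rw [hΩsup 0 g hg]
    simp
  have hΩsmul : ∀ (c : ℝ), 0 ≤ c → ∀ x : Fin n → ℝ, Ω (c • x) = c * Ω x := by
    intro c hc x
    rw [hΩ, hΩ, Finset.mul_sum]
    refine Finset.sum_congr rfl fun g hg => ?_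
    rw [hΩsup _ g hg, hΩsup _ g hg]
    have habs : ∀ i : Fin n, |(c • x) i| = c * |x i| := fun i => by
      simp [Pi.smul_apply, smul_eq_mul, abs_mul, abs_of_nonneg hc]
    calc g.sup' (h_nonempty g hg) (fun i => |(c • x) i|)
        = g.sup' (h_nonempty g hg) (fun i => c * |x i|) :=
          Finset.sup'_congr _ rfl fun i _ => habs i
      _ = c * g.sup' (h_nonempty g hg) (fun i => |x i|) :=
          prox_aux_sup'_smul g _ c hc _
  have hΩadd : ∀ a b : Fin n → ℝ, Ω (a + b) ≤ Ω a + Ω b := by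
    intro a b
    rw [hΩ, hΩ, hΩ, ← Finset.sum_add_distrib]
    refine Finset.sum_le_sum fun g hg => ?_
    rw [hΩsup _ g hg, hΩsup _ g hg, hΩsup _ g hg]
    refine Finset.sup'_le _ _ fun i hi => ?_
    calc |(a + b) i| = |a i + b i| := rfl
      _ ≤ |a i| + |b i| := abs_add_le _ _
      _ ≤ _ := add_le_add (Finset.le_sup' (fun j => |a j|) hi)
          (Finset.le_sup' (fun j => |b j|) hi)
  -- The function phi, kept opaque for linarith
  obtain ⟨phi, hpx⟩ : ∃ phi : (Fin n → ℝ) → ℝ,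
      ∀ z : Fin n → ℝ, phi z = lam1 * (∑ i, |z i|) + laminf * Ω z := ⟨_, fun _ => rfl⟩
  have hphi0 : phi 0 = 0 := by
    rw [hpx, hΩ0]; simp
  have hphismul : ∀ (c : ℝ), 0 ≤ c → ∀ z : Fin n → ℝ, phi (c • z) = c * phi z := by
    intro c hc z
    rw [hpx, hpx, hΩsmul c hc]
    have habs : (∑ i, |(c • z) i|) = c * ∑ i, |z i| := by
      rw [Finset.mul_sum]
      exact Finset.sum_congr rfl fun i _ => by
        simp [Pi.smul_apply, smul_eq_mul, abs_mul, abs_of_nonneg hc]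
    rw [habs]; ring
  have hphiadd : ∀ a b : Fin n → ℝ, phi (a + b) ≤ phi a + phi b := by
    intro a b
    rw [hpx, hpx, hpx]
    have hl1 : (∑ i, |(a + b) i|) ≤ (∑ i, |a i|) + ∑ i, |b i| := by
      rw [← Finset.sum_add_distrib]
      exact Finset.sum_le_sum fun i _ => abs_add_le _ _
    have hOm := hΩadd a b
    nlinarith [hl1, hOm, h1.le, hinf.le]
  -- minimality in terms of phi
  have hu' : ∀ x : Fin n → ℝ,
      (1 / 2) * (∑ i, (u i - y i) ^ 2) + phi u ≤ (1 / 2) * (∑ i, (x i - y i) ^ 2) + phi x := by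
    intro x
    have := hu x
    rw [hpx, hpx]
    linarith
  -- subgradient inequality at u
  have hsg : ∀ x : Fin n → ℝ,
      phi u + (∑ i, (y i - u i) * (x i - u i)) ≤ phi x := by
    intro x
    obtain ⟨M, hM⟩ : ∃ M : ℝ, (∑ i, (y i - u i) * (x i - u i)) = M := ⟨_, rfl⟩
    obtain ⟨D, hD⟩ : ∃ D : ℝ, (∑ i, (x i - u i) ^ 2) = D := ⟨_, rfl⟩
    obtain ⟨Su, hSu⟩ : ∃ S : ℝ, (∑ i, (u i - y i) ^ 2) = S := ⟨_, rfl⟩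
    have hDnn : 0 ≤ D := hD ▸ Finset.sum_nonneg fun i _ => sq_nonneg _
    rw [hM]
    have step : ∀ t : ℝ, 0 < t → t ≤ 1 → 0 ≤ (phi x - phi u - M) + t * (D / 2) := by
      intro t ht ht1
      have hxt := hu' (u + t • (x - u))
      have hquad : (∑ i, ((u + t • (x - u)) i - y i) ^ 2)
          = Su - 2 * t * M + t ^ 2 * D := by
        have hper : ∀ i : Fin n, ((u + t • (x - u)) i - y i) ^ 2
            = (u i - y i) ^ 2 - (2 * t) * ((y i - u i) * (x i - u i))
              + t ^ 2 * ((x i - u i) ^ 2) := by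
          intro i
          simp only [Pi.add_apply, Pi.smul_apply, Pi.sub_apply, smul_eq_mul]
          ring
        rw [Finset.sum_congr rfl fun i _ => hper i]
        rw [Finset.sum_add_distrib, Finset.sum_sub_distrib, ← Finset.mul_sum, ← Finset.mul_sum]
        rw [hM, hD, hSu]
      have hcv : phi (u + t • (x - u)) ≤ (1 - t) * phi u + t * phi x := by
        have hrepr : u + t • (x - u) = (1 - t) • u + t • x := by
          funext i
          simp only [Pi.add_apply, Pi.smul_apply, Pi.sub_apply, smul_eq_mul]
          ring
        rw [hrepr]
        calc phi ((1 - t) • u + t • x) ≤ phi ((1 - t) • u) + phi (t • x) := hphiadd _ _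
          _ = (1 - t) * phi u + t * phi x := by
              rw [hphismul _ (by linarith), hphismul _ ht.le]
      rw [hquad, hSu] at hxt
      have h0 : t * 0 ≤ t * ((phi x - phi u - M) + t * (D / 2)) := by
        nlinarith [hxt, hcv]
      exact le_of_mul_le_mul_left h0 ht
    by_contra hcon
    push_neg at hcon
    have hAneg : phi x - phi u - M < 0 := by linarith
    set B : ℝ := D / 2 with hB
    have hBnn : 0 ≤ B := by rw [hB]; linarith
    set t : ℝ := min 1 ((-(phi x - phi u - M)) / (2 * (B + 1))) with htdef
    have hBp : (0:ℝ) < 2 * (B + 1) := by linarith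
    have ht : 0 < t := lt_min one_pos (div_pos (by linarith) hBp)
    have ht1 : t ≤ 1 := min_le_left _ _
    have ht2 : t ≤ (-(phi x - phi u - M)) / (2 * (B + 1)) := min_le_right _ _
    have hstep := step t ht ht1
    have hmul : t * (2 * (B + 1)) ≤ -(phi x - phi u - M) := by
      have := mul_le_mul_of_nonneg_right ht2 hBp.le
      rwa [div_mul_cancel₀ _ hBp.ne'] at this
    nlinarith [hstep, hmul, ht, hBnn]
  -- equality of the linear form at u
  have key1 : phi u ≤ ∑ i, (y i - u i) * u i := by
    have hs := hsg 0
    have hrw : (∑ i, (y i - u i) * ((0 : Fin n → ℝ) i - u i)) = -∑ i, (y i - u i) * u i := by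
      rw [← Finset.sum_neg_distrib]
      exact Finset.sum_congr rfl fun i _ => by
        simp only [Pi.zero_apply]; ring
    rw [hrw, hphi0] at hs
    linarith
  have key2 : (∑ i, (y i - u i) * u i) ≤ phi u := by
    have hs := hsg ((2:ℝ) • u)
    have hrw : (∑ i, (y i - u i) * (((2:ℝ) • u) i - u i)) = ∑ i, (y i - u i) * u i :=
      Finset.sum_congr rfl fun i _ => by
        simp only [Pi.smul_apply, smul_eq_mul]; ring
    rw [hrw, hphismul 2 (by norm_num) u] at hs
    linarith
  have heq : (∑ i, (y i - u i) * u i) = phi u := le_antisymm key2 key1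
  have hsub : ∀ x : Fin n → ℝ, (∑ i, (y i - u i) * x i) ≤ phi x := by
    intro x
    have hs := hsg x
    have hexp : (∑ i, (y i - u i) * (x i - u i))
        = (∑ i, (y i - u i) * x i) - ∑ i, (y i - u i) * u i := by
      rw [← Finset.sum_sub_distrib]
      exact Finset.sum_congr rfl fun i _ => by ring
    rw [hexp, heq] at hs
    linarith
  -- key properties of xstar
  have hP1 : phi xstar = ∑ i, (y i - u i) * xstar i := by
    by_cases hle : Real.sqrt (∑ i, (u i) ^ 2) ≤ lam2
    · have hx0 : xstar = 0 := by rw [hxstar, if_pos hle]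
      rw [hx0, hphi0]
      simp
    · push_neg at hle
      have hnupos : 0 < Real.sqrt (∑ i, (u i) ^ 2) := lt_trans h2 hle
      have hc0 : 0 ≤ 1 - lam2 / Real.sqrt (∑ i, (u i) ^ 2) := by
        have := (div_lt_one hnupos).2 hle
        linarith
      have hxc : xstar = (1 - lam2 / Real.sqrt (∑ i, (u i) ^ 2)) • u := by
        rw [hxstar, if_neg (not_le.2 hle)]
      rw [hxc, hphismul _ hc0, ← heq, Finset.mul_sum]
      exact Finset.sum_congr rfl fun i _ => by
        simp only [Pi.smul_apply, smul_eq_mul]; ring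
  have hP2 : ∀ x : Fin n → ℝ,
      lam2 * Real.sqrt (∑ i, (xstar i) ^ 2) + (∑ i, (u i - xstar i) * (x i - xstar i))
        ≤ lam2 * Real.sqrt (∑ i, (x i) ^ 2) := by
    intro x
    have hcs : (∑ i, u i * x i)
        ≤ Real.sqrt (∑ i, (u i) ^ 2) * Real.sqrt (∑ i, (x i) ^ 2) := prox_aux_cs u x
    by_cases hle : Real.sqrt (∑ i, (u i) ^ 2) ≤ lam2
    · have hx0 : xstar = 0 := by rw [hxstar, if_pos hle]
      rw [hx0]
      simp only [Pi.zero_apply, sub_zero]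
      have h00 : Real.sqrt (∑ _i : Fin n, (0:ℝ) ^ 2) = 0 := by simp
      rw [h00, mul_zero, zero_add]
      calc (∑ i, u i * x i)
          ≤ Real.sqrt (∑ i, (u i) ^ 2) * Real.sqrt (∑ i, (x i) ^ 2) := hcs
        _ ≤ lam2 * Real.sqrt (∑ i, (x i) ^ 2) :=
            mul_le_mul_of_nonneg_right hle (Real.sqrt_nonneg _)
    · push_neg at hle
      obtain ⟨nu, hnu⟩ : ∃ nu : ℝ, Real.sqrt (∑ i, (u i) ^ 2) = nu := ⟨_, rfl⟩
      rw [hnu] at hcs hle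
      have hnupos : 0 < nu := lt_trans h2 hle
      have hne : nu ≠ 0 := hnupos.ne'
      obtain ⟨c, hcdef⟩ : ∃ c : ℝ, 1 - lam2 / nu = c := ⟨_, rfl⟩
      have hc0 : 0 ≤ c := by
        rw [← hcdef]
        have := (div_lt_one hnupos).2 hle
        linarith
      have hxc : xstar = c • u := by
        rw [hxstar, if_neg (not_le.2 (hnu ▸ hle)), hnu, hcdef]
      have hnusq : nu ^ 2 = ∑ i, (u i) ^ 2 := by
        rw [← hnu]
        exact Real.sq_sqrt (Finset.sum_nonneg fun i _ => sq_nonneg _)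
      have hxnorm : Real.sqrt (∑ i, (xstar i) ^ 2) = c * nu := by
        rw [hxc]
        have hss : (∑ i, ((c • u) i) ^ 2) = c ^ 2 * ∑ i, (u i) ^ 2 := by
          rw [Finset.mul_sum]
          exact Finset.sum_congr rfl fun i _ => by
            simp only [Pi.smul_apply, smul_eq_mul]; ring
        rw [hss, Real.sqrt_mul (sq_nonneg c), Real.sqrt_sq hc0, hnu]
      have hsum : (∑ i, (u i - xstar i) * (x i - xstar i))
          = (1 - c) * (∑ i, u i * x i) - (1 - c) * c * (∑ i, (u i) ^ 2) := by
        rw [hxc, Finset.mul_sum, Finset.mul_sum, ← Finset.sum_sub_distrib]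
        exact Finset.sum_congr rfl fun i _ => by
          simp only [Pi.smul_apply, smul_eq_mul]; ring
      have h1c : 1 - c = lam2 / nu := by rw [← hcdef]; ring
      have hid1 : lam2 / nu * nu = lam2 := div_mul_cancel₀ _ hne
      have hcs' : lam2 / nu * (∑ i, u i * x i)
          ≤ lam2 / nu * (nu * Real.sqrt (∑ i, (x i) ^ 2)) :=
        mul_le_mul_of_nonneg_left hcs (div_nonneg h2.le hnupos.le)
      have e1 : lam2 / nu * c * (∑ i, (u i) ^ 2) = lam2 * (c * nu) := by
        rw [← hnusq]; field_simp
      have e2 : lam2 / nu * (nu * Real.sqrt (∑ i, (x i) ^ 2))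
          = lam2 * Real.sqrt (∑ i, (x i) ^ 2) := by
        rw [← mul_assoc, hid1]
      rw [hxnorm, hsum, h1c]
      rw [e2] at hcs'
      linarith [hcs', e1]
  -- quadratic expansion
  have hquadid : ∀ x : Fin n → ℝ,
      (1/2) * (∑ i, (x i - y i) ^ 2)
        = (1/2) * (∑ i, (xstar i - y i) ^ 2) + (∑ i, (xstar i - y i) * (x i - xstar i))
          + (1/2) * (∑ i, (x i - xstar i) ^ 2) := by
    intro x
    have hper : ∀ i : Fin n, (x i - y i) ^ 2
        = (xstar i - y i) ^ 2 + 2 * ((xstar i - y i) * (x i - xstar i))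
          + (x i - xstar i) ^ 2 := fun i => by ring
    rw [Finset.sum_congr rfl fun i _ => hper i, Finset.sum_add_distrib,
      Finset.sum_add_distrib, ← Finset.mul_sum]
    ring
  have hphikey : ∀ x : Fin n → ℝ,
      phi xstar + (∑ i, (y i - u i) * (x i - xstar i)) ≤ phi x := by
    intro x
    have hexp : (∑ i, (y i - u i) * (x i - xstar i))
        = (∑ i, (y i - u i) * x i) - ∑ i, (y i - u i) * xstar i := by
      rw [← Finset.sum_sub_distrib]
      exact Finset.sum_congr rfl fun i _ => by ring
    have hs := hsub x
    rw [hexp, ← hP1]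
    linarith
  have hzero : ∀ x : Fin n → ℝ,
      (∑ i, (xstar i - y i) * (x i - xstar i)) + (∑ i, (y i - u i) * (x i - xstar i))
        + (∑ i, (u i - xstar i) * (x i - xstar i)) = 0 := by
    intro x
    rw [← Finset.sum_add_distrib, ← Finset.sum_add_distrib]
    exact Finset.sum_eq_zero fun i _ => by ring
  have hsqnn : ∀ x : Fin n → ℝ, 0 ≤ ∑ i, (x i - xstar i) ^ 2 :=
    fun x => Finset.sum_nonneg fun i _ => sq_nonneg _
  -- the key strong inequality
  have key : ∀ x : Fin n → ℝ,
      ((1/2) * (∑ i, (xstar i - y i) ^ 2) + lam1 * (∑ i, |xstar i|) + laminf * Ω xstar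
        + lam2 * Real.sqrt (∑ i, (xstar i) ^ 2)) + (1/2) * (∑ i, (x i - xstar i) ^ 2)
      ≤ (1/2) * (∑ i, (x i - y i) ^ 2) + lam1 * (∑ i, |x i|) + laminf * Ω x
        + lam2 * Real.sqrt (∑ i, (x i) ^ 2) := by
    intro x
    have hq := hquadid x
    have hp := hphikey x
    have hz := hzero x
    have h2' := hP2 x
    have e1 := hpx x
    have e2 := hpx xstar
    linarith
  constructor
  · intro x
    have hk := key x
    have hnn := hsqnn x
    linarith
  · intro x hmin
    have hm := hmin xstar
    have hk := key x
    have h3 : (∑ i, (x i - xstar i) ^ 2) ≤ 0 := by linarith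
    have h4 := (Finset.sum_eq_zero_iff_of_nonneg
      (fun i (_ : i ∈ Finset.univ) => sq_nonneg (x i - xstar i))).mp
      (le_antisymm h3 (hsqnn x))
    funext i
    have h5 := h4 i (Finset.mem_univ i)
    have h6 := sq_eq_zero_iff.mp h5
    linarith [sub_eq_zero.mp h6]
end

section
/- (Rank-deficient local minima of factorized convex programs are global) Let f : ℝ^{n×n} → ℝ be convex and twice continuously differentiable, and fix M ∈ ℕ. Suppose Q₀ ∈ ℝ^{n×M} is a local minimizer of the function Q ↦ f(Q·Qᵀ) on ℝ^{n×M} and rank(Q₀) < M. Then Q₀·Q₀ᵀ is a global minimizer of f over the set of n×n positive semidefinite real matrices: for every positive semidefinite Y ∈ ℝ^{n×n}, f(Q₀·Q₀ᵀ) ≤ f(Y). -/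
open Matrix
open Filter

attribute [local instance] Matrix.normedAddCommGroup Matrix.normedSpace

/-- (Rank-deficient local minima of factorized convex programs are global) Let
`f : ℝ^{n×n} → ℝ` be convex and twice continuously differentiable. If `Q₀ ∈ ℝ^{n×M}` is a
local minimizer of `Q ↦ f(Q·Qᵀ)` and `rank(Q₀) < M`, then `Q₀·Q₀ᵀ` is a global minimizer
of `f` over the positive semidefinite matrices. -/
theorem rank_deficient_local_min_is_global (n M : ℕ)
    (f : Matrix (Fin n) (Fin n) ℝ → ℝ)
    (hconv : ConvexOn ℝ Set.univ f)
    (hsmooth : ContDiff ℝ 2 f)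
    (Q₀ : Matrix (Fin n) (Fin M) ℝ)
    (hloc : IsLocalMin (fun Q : Matrix (Fin n) (Fin M) ℝ => f (Q * Qᵀ)) Q₀)
    (hrank : Q₀.rank < M) :
    ∀ Y : Matrix (Fin n) (Fin n) ℝ, Y.PosSemidef → f (Q₀ * Q₀ᵀ) ≤ f Y := by
  intro Y hY
  set X₀ : Matrix (Fin n) (Fin n) ℝ := Q₀ * Q₀ᵀ with hX₀def
  have hdiff : Differentiable ℝ f := hsmooth.differentiable (by norm_num)
  set G : Matrix (Fin n) (Fin n) ℝ →L[ℝ] ℝ := fderiv ℝ f X₀ with hGdef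
  have hfd : HasFDerivAt f G X₀ := (hdiff X₀).hasFDerivAt
  -- null vector
  obtain ⟨v, hv0, hvker⟩ : ∃ v : Fin M → ℝ, v ≠ 0 ∧ Q₀.mulVec v = 0 := by
    have h := LinearMap.finrank_range_add_finrank_ker Q₀.mulVecLin
    simp [Module.finrank_fintype_fun_eq_card] at h
    have hker : 0 < Module.finrank ℝ (LinearMap.ker Q₀.mulVecLin) := by
      unfold Matrix.rank at hrank; omega
    obtain ⟨⟨v, hv⟩, hv0⟩ := Module.finrank_pos_iff_exists_ne_zero.mp hker
    exact ⟨v, by simpa using hv0, hv⟩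
  set c : ℝ := ∑ i, v i * v i with hcdef
  have hc : 0 < c := by
    have hex : ∃ i, v i ≠ 0 := by
      by_contra h; push_neg at h; exact hv0 (funext fun i => h i)
    obtain ⟨i, hi⟩ := hex
    exact Finset.sum_pos' (fun j _ => mul_self_nonneg _)
      ⟨i, Finset.mem_univ i, mul_self_pos.mpr hi⟩
  -- generic chain rule along curves t ↦ X₀ + g t • A
  have curve_deriv : ∀ (A : Matrix (Fin n) (Fin n) ℝ) (g : ℝ → ℝ) (g' : ℝ)
      (hg : HasDerivAt g g' 0) (hg0 : g 0 = 0),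
      HasDerivAt (fun t : ℝ => f (X₀ + g t • A)) (g' * G A) 0 := by
    intro A g g' hg hg0
    have h1 : HasDerivAt (fun t : ℝ => X₀ + g t • A) (g' • A) 0 :=
      (hg.smul_const A).const_add X₀
    have hfd' : HasFDerivAt f G ((fun t : ℝ => X₀ + g t • A) 0) := by
      simpa [hg0] using hfd
    have h2 := hfd'.comp_hasDerivAt 0 h1
    have h3 : G (g' • A) = g' * G A := G.map_smul g' A
    rw [← h3]; exact h2
  -- Step 1: G applied to any u uᵀ is nonneg
  have step1 : ∀ u : Fin n → ℝ, 0 ≤ G (vecMulVec u u) := by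
    intro u
    set A : Matrix (Fin n) (Fin n) ℝ := vecMulVec u u with hA
    have hkey : ∀ t : ℝ, (Q₀ + t • vecMulVec u v) * (Q₀ + t • vecMulVec u v)ᵀ
        = X₀ + (t^2 * c) • A := by
      intro t
      ext i j
      simp only [Matrix.add_apply, Matrix.mul_apply, Matrix.transpose_apply, Matrix.smul_apply,
        vecMulVec_apply, smul_eq_mul, hX₀def, hA, hcdef]
      have hvi : ∑ k, Q₀ i k * v k = 0 := congrFun hvker i
      have hvj : ∑ k, Q₀ j k * v k = 0 := congrFun hvker j
      calc ∑ k, (Q₀ i k + t * (u i * v k)) * (Q₀ j k + t * (u j * v k))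
          = (∑ k, Q₀ i k * Q₀ j k) + (t * u j) * (∑ k, Q₀ i k * v k)
            + (t * u i) * (∑ k, Q₀ j k * v k) + (t^2 * (u i * u j)) * ∑ k, v k * v k := by
            rw [Finset.mul_sum, Finset.mul_sum, Finset.mul_sum, ← Finset.sum_add_distrib,
              ← Finset.sum_add_distrib, ← Finset.sum_add_distrib]
            exact Finset.sum_congr rfl fun k _ => by ring
        _ = (∑ k, Q₀ i k * Q₀ j k) + t^2 * (∑ k, v k * v k) * (u i * u j) := by
            rw [hvi, hvj]; ring
    have hcont : Continuous (fun t : ℝ => Q₀ + t • vecMulVec u v) := by continuity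
    have htend : Tendsto (fun t : ℝ => Q₀ + t • vecMulVec u v) (nhds 0) (nhds Q₀) := by
      simpa using (hcont.continuousAt (x := 0)).tendsto
    have hev : ∀ᶠ t : ℝ in nhds 0, f X₀ ≤ f (X₀ + (t^2 * c) • A) := by
      filter_upwards [htend.eventually hloc] with t ht
      simpa only [← hkey t] using ht
    obtain ⟨δ, hδ, hδev⟩ := Metric.eventually_nhds_iff.mp hev
    have hsle : ∀ s : ℝ, 0 < s → s < δ^2 * c → f X₀ ≤ f (X₀ + s • A) := by
      intro s hs hs'
      have hsc : 0 < s / c := div_pos hs hc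
      have ht2 : (Real.sqrt (s / c))^2 = s / c := Real.sq_sqrt hsc.le
      have htδ : Real.sqrt (s / c) < δ := by
        have h1 : s / c < δ^2 := (div_lt_iff₀ hc).mpr (by linarith)
        calc Real.sqrt (s / c) < Real.sqrt (δ^2) := Real.sqrt_lt_sqrt hsc.le h1
          _ = δ := by rw [Real.sqrt_sq hδ.le]
      have hd : dist (Real.sqrt (s / c)) 0 < δ := by
        rw [Real.dist_eq, sub_zero, abs_of_nonneg (Real.sqrt_nonneg _)]; exact htδ
      have := hδev hd
      have hseq : (Real.sqrt (s / c))^2 * c = s := by rw [ht2]; field_simp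
      simpa [hseq] using this
    have hder : HasDerivAt (fun s : ℝ => f (X₀ + s • A)) (G A) 0 := by
      simpa using curve_deriv A id 1 (hasDerivAt_id 0) rfl
    have hslope : Tendsto (slope (fun s : ℝ => f (X₀ + s • A)) 0)
        (nhdsWithin 0 (Set.Ioi 0)) (nhds (G A)) :=
      (hasDerivAt_iff_tendsto_slope.mp hder).mono_left
        (nhdsWithin_mono 0 (fun x hx => ne_of_gt hx))
    refine ge_of_tendsto hslope ?_
    filter_upwards [Ioo_mem_nhdsGT_of_mem
      (Set.mem_Ico.mpr ⟨le_refl 0, by positivity⟩ : (0:ℝ) ∈ Set.Ico 0 (δ^2 * c))] with s hs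
    rw [slope_def_field]
    apply div_nonneg _ (by linarith [hs.1])
    simp only [zero_smul, add_zero]
    linarith [hsle s hs.1 hs.2]
  -- Step 2: G X₀ = 0
  have step2 : G X₀ = 0 := by
    have hkey : ∀ t : ℝ, (Q₀ + t • Q₀) * (Q₀ + t • Q₀)ᵀ = X₀ + (2*t + t^2) • X₀ := by
      intro t
      have h1 : Q₀ + t • Q₀ = (1 + t) • Q₀ := by rw [add_smul, one_smul]
      rw [h1, transpose_smul, Matrix.smul_mul, Matrix.mul_smul, smul_smul, ← hX₀def,
        show (1+t)*(1+t) = 1 + (2*t + t^2) by ring, add_smul, one_smul]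
    have hcont : Continuous (fun t : ℝ => Q₀ + t • Q₀) := by continuity
    have htend : Tendsto (fun t : ℝ => Q₀ + t • Q₀) (nhds 0) (nhds Q₀) := by
      simpa using (hcont.continuousAt (x := 0)).tendsto
    have hmin : IsLocalMin (fun t : ℝ => f (X₀ + (2*t + t^2) • X₀)) 0 := by
      have hev := htend.eventually hloc
      filter_upwards [hev] with t ht
      simp only [mul_zero, add_zero, zero_smul]
      have h0 : (2*(0:ℝ) + 0^2) • X₀ = (0:Matrix (Fin n) (Fin n) ℝ) := by norm_num
      rw [show X₀ + (2*t + t^2) • X₀ = (Q₀ + t • Q₀) * (Q₀ + t • Q₀)ᵀ from (hkey t).symm]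
      simpa using ht
    have hg : HasDerivAt (fun t : ℝ => 2*t + t^2) 2 0 := by
      have := ((hasDerivAt_id (0:ℝ)).const_mul 2).add (hasDerivAt_pow 2 (0:ℝ))
      simpa [Pi.add_def] using this
    have hder : HasDerivAt (fun t : ℝ => f (X₀ + (2*t + t^2) • X₀)) (2 * G X₀) 0 :=
      curve_deriv X₀ _ 2 hg (by norm_num)
    have := hmin.deriv_eq_zero
    rw [hder.deriv] at this
    linarith
  -- Step 3: 0 ≤ G Y via sqrt decomposition
  have hGY : 0 ≤ G Y := by
    open MatrixOrder in
    set C : Matrix (Fin n) (Fin n) ℝ := CFC.sqrt Y with hC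
    open MatrixOrder in
    have hherm : C.IsHermitian := (CFC.sqrt_nonneg Y).posSemidef.1
    have hsym : ∀ j k, C j k = C k j := by
      intro j k
      have := hherm.apply j k
      simpa using this.symm
    have hdecomp : Y = ∑ j : Fin n, vecMulVec (fun i => C i j) (fun i => C i j) := by
      open MatrixOrder in
      rw [← CFC.sqrt_mul_sqrt_self Y hY.nonneg, ← hC]
      ext i k
      simp only [Matrix.mul_apply, Matrix.sum_apply, vecMulVec_apply]
      exact Finset.sum_congr rfl fun j _ => by rw [hsym j k]
    rw [hdecomp, map_sum]
    exact Finset.sum_nonneg fun j _ => step1 _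
  -- Step 4: convexity slope inequality
  have hfin : G (Y - X₀) ≤ f Y - f X₀ := by
    have hder : HasDerivAt (fun τ : ℝ => f (X₀ + τ • (Y - X₀))) (G (Y - X₀)) 0 := by
      simpa using curve_deriv (Y - X₀) id 1 (hasDerivAt_id 0) rfl
    have hslope : Tendsto (slope (fun τ : ℝ => f (X₀ + τ • (Y - X₀))) 0)
        (nhdsWithin 0 (Set.Ioi 0)) (nhds (G (Y - X₀))) :=
      (hasDerivAt_iff_tendsto_slope.mp hder).mono_left
        (nhdsWithin_mono 0 (fun x hx => ne_of_gt hx))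
    refine le_of_tendsto hslope ?_
    filter_upwards [Ioo_mem_nhdsGT_of_mem
      (Set.mem_Ico.mpr ⟨le_refl 0, one_pos⟩ : (0:ℝ) ∈ Set.Ico 0 1)] with τ hτ
    have heq : X₀ + τ • (Y - X₀) = (1-τ) • X₀ + τ • Y := by
      rw [smul_sub, sub_smul, one_smul]; abel
    rw [slope_def_field]
    simp only [zero_smul, add_zero, sub_zero]
    rw [div_le_iff₀ hτ.1, heq]
    have hcvx := hconv.2 (Set.mem_univ X₀) (Set.mem_univ Y)
      (by linarith [hτ.2] : (0:ℝ) ≤ 1 - τ) hτ.1.le (by ring)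
    have h2 : (1-τ) • f X₀ + τ • f Y = f X₀ + (f Y - f X₀) * τ := by
      simp only [smul_eq_mul]; ring
    linarith [hcvx, h2]
  have hsub : G (Y - X₀) = G Y := by rw [map_sub, step2, sub_zero]
  linarith [hfin, hGY, hsub ▸ hfin]
end
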